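/- arXiv:1910.06802 — 5 statements merged into one kernel-verified Lean document; each statement's English description precedes it below -/
import Mathlib

section
/- Let X be a separable real Hilbert space with inner product ⟨·,·⟩ and Hilbert (orthonormal) basis (φ_k)_{k≥1}, let (λ_k)_{k≥1} be a nondecreasing sequence of nonnegative real numbers, let B : X → X be a bounded linear operator with operator norm at most C_B, where C_B ≥ 1, let T > 0, p ∈ L²((0,T);ℝ), v₀ ∈ X, and let v : [0,T] → X be a continuous function satisfying, for every k ≥ 1 and every t ∈ [0,T], ⟨v(t), φ_k⟩ = e^{−λ_k t}⟨v₀, φ_k⟩ − ∫₀^t e^{−λ_k(t−s)} p(s) ⟨B(v(s) + φ₁), φ_k⟩ ds. Then sup_{t∈[0,T]} ‖v(t)‖² ≤ e^{C_B( 2√T ‖p‖_{L²(0,T)} + T )} ( ‖v₀‖² + C_B ‖p‖²_{L²(0,T)} ). -/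
open MeasureTheory
open scoped RealInnerProductSpace

section EnergyAux

lemma exp_integral (l u t : ℝ) :
    ∫ s in u..t, 2 * l * Real.exp (-(2 * l) * s)
      = Real.exp (-(2*l)*u) - Real.exp (-(2*l)*t) := by
  have h : ∀ x ∈ Set.uIcc u t, HasDerivAt (fun s => -Real.exp (-(2*l)*s))
      (2 * l * Real.exp (-(2*l)*x)) x := by
    intro x _
    have h1 : HasDerivAt (fun s : ℝ => -(2*l) * s) (-(2*l)) x := by
      simpa using (hasDerivAt_id x).const_mul (-(2*l))
    have h2 := h1.exp
    have h3 := h2.fun_neg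
    exact h3.congr_deriv (by ring)
  have hint : IntervalIntegrable (fun x => 2 * l * Real.exp (-(2*l)*x)) volume u t :=
    (Continuous.intervalIntegrable (by continuity) u t)
  have := intervalIntegral.integral_eq_sub_of_hasDerivAt h hint
  rw [this]; ring

lemma triangle_swap {t : ℝ} {F G : ℝ → ℝ}
    (hF : IntegrableOn F (Set.Ioc 0 t)) (hG : IntegrableOn G (Set.Ioc 0 t)) :
    ∫ u in Set.Ioc 0 t, F u * ∫ w in Set.Ioc u t, G w
      = ∫ w in Set.Ioc 0 t, (∫ u in Set.Ioc 0 w, F u) * G w := by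
  set μ := volume.restrict (Set.Ioc (0:ℝ) t) with hμ
  have hs : MeasurableSet {z : ℝ × ℝ | z.1 < z.2} :=
    measurableSet_lt measurable_fst measurable_snd
  have hint : Integrable ({z : ℝ × ℝ | z.1 < z.2}.indicator (fun z => F z.1 * G z.2))
      (μ.prod μ) := (hF.mul_prod hG).indicator hs
  have hswap := MeasureTheory.integral_integral_swap
    (f := fun u w => {z : ℝ × ℝ | z.1 < z.2}.indicator (fun z => F z.1 * G z.2) (u, w)) hint
  have L : ∀ u ∈ Set.Ioc (0:ℝ) t,
      (∫ w, ({z : ℝ × ℝ | z.1 < z.2}.indicator (fun z => F z.1 * G z.2) (u, w)) ∂μ)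
        = F u * ∫ w in Set.Ioc u t, G w := by
    intro u hu
    have h1 : (fun w => ({z : ℝ × ℝ | z.1 < z.2}.indicator (fun z => F z.1 * G z.2) (u, w)))
        = fun w => (Set.Ioi u).indicator (fun w => F u * G w) w := by
      funext w; by_cases h : u < w
      · simp [Set.indicator_of_mem, h, Set.mem_setOf_eq, Set.mem_Ioi]
      · simp [Set.indicator_of_notMem, h, Set.mem_setOf_eq, Set.mem_Ioi]
    rw [h1, integral_indicator measurableSet_Ioi, hμ,
      Measure.restrict_restrict measurableSet_Ioi]
    have hset : Set.Ioi u ∩ Set.Ioc 0 t = Set.Ioc u t := by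
      ext w
      simp only [Set.mem_inter_iff, Set.mem_Ioi, Set.mem_Ioc]
      exact ⟨fun ⟨h1, h2, h3⟩ => ⟨h1, h3⟩, fun ⟨h1, h3⟩ => ⟨h1, lt_trans hu.1 h1, h3⟩⟩
    rw [hset, integral_const_mul]
  have R : ∀ w ∈ Set.Ioc (0:ℝ) t,
      (∫ u, ({z : ℝ × ℝ | z.1 < z.2}.indicator (fun z => F z.1 * G z.2) (u, w)) ∂μ)
        = (∫ u in Set.Ioc 0 w, F u) * G w := by
    intro w hw
    have h1 : (fun u => ({z : ℝ × ℝ | z.1 < z.2}.indicator (fun z => F z.1 * G z.2) (u, w)))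
        = fun u => (Set.Iio w).indicator (fun u => F u * G w) u := by
      funext u; by_cases h : u < w
      · simp [Set.indicator_of_mem, h, Set.mem_setOf_eq, Set.mem_Iio]
      · simp [Set.indicator_of_notMem, h, Set.mem_setOf_eq, Set.mem_Iio]
    rw [h1, integral_indicator measurableSet_Iio, hμ,
      Measure.restrict_restrict measurableSet_Iio]
    have hset : Set.Iio w ∩ Set.Ioc 0 t = Set.Ioo 0 w := by
      ext u
      simp only [Set.mem_inter_iff, Set.mem_Iio, Set.mem_Ioc, Set.mem_Ioo]
      exact ⟨fun ⟨h1, h2, h3⟩ => ⟨h2, h1⟩, fun ⟨h2, h1⟩ => ⟨h1, h2, le_trans h1.le hw.2⟩⟩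
    rw [hset, ← integral_Ioc_eq_integral_Ioo, integral_mul_const]
  calc ∫ u in Set.Ioc 0 t, F u * ∫ w in Set.Ioc u t, G w
      = ∫ u, (∫ w, ({z : ℝ × ℝ | z.1 < z.2}.indicator (fun z => F z.1 * G z.2) (u, w)) ∂μ) ∂μ := by
        refine (setIntegral_congr_fun measurableSet_Ioc ?_).symm
        intro u hu; exact L u hu
    _ = ∫ w, (∫ u, ({z : ℝ × ℝ | z.1 < z.2}.indicator (fun z => F z.1 * G z.2) (u, w)) ∂μ) ∂μ :=
        hswap
    _ = ∫ w in Set.Ioc 0 t, (∫ u in Set.Ioc 0 w, F u) * G w := by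
        refine setIntegral_congr_fun measurableSet_Ioc ?_
        intro w hw; exact R w hw

lemma ii_left {t u : ℝ} {r : ℝ → ℝ} (hu : 0 ≤ u) (hut : u ≤ t)
    (hr : IntervalIntegrable r volume 0 t) : IntervalIntegrable r volume 0 u := by
  rw [intervalIntegrable_iff_integrableOn_Ioc_of_le hu]
  exact ((intervalIntegrable_iff_integrableOn_Ioc_of_le (hu.trans hut)).mp hr).mono_set
    (Set.Ioc_subset_Ioc le_rfl hut)

lemma ii_right {t u : ℝ} {r : ℝ → ℝ} (hu : 0 ≤ u) (hut : u ≤ t)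
    (hr : IntervalIntegrable r volume 0 t) : IntervalIntegrable r volume u t := by
  rw [intervalIntegrable_iff_integrableOn_Ioc_of_le hut]
  exact ((intervalIntegrable_iff_integrableOn_Ioc_of_le (hu.trans hut)).mp hr).mono_set
    (Set.Ioc_subset_Ioc hu le_rfl)

lemma interval_sub {t u : ℝ} {r : ℝ → ℝ} (hu : 0 ≤ u) (hut : u ≤ t)
    (hr : IntervalIntegrable r volume 0 t) :
    ∫ w in u..t, r w = (∫ w in (0:ℝ)..t, r w) - ∫ w in (0:ℝ)..u, r w := by
  rw [eq_sub_iff_add_eq, add_comm]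
  exact intervalIntegral.integral_add_adjacent_intervals (ii_left hu hut hr)
    (ii_right hu hut hr)

lemma sq_primitive {t : ℝ} (ht : 0 ≤ t) {r : ℝ → ℝ}
    (hr : IntervalIntegrable r volume 0 t) :
    (∫ u in (0:ℝ)..t, r u)^2 = 2 * ∫ u in (0:ℝ)..t, r u * (∫ w in (0:ℝ)..u, r w) := by
  have hRc : ContinuousOn (fun s => ∫ u in (0:ℝ)..s, r u) (Set.uIcc 0 t) :=
    intervalIntegral.continuousOn_primitive_interval' hr Set.left_mem_uIcc
  have h1 : IntervalIntegrable (fun u => r u * ∫ w in (0:ℝ)..u, r w) volume 0 t :=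
    hr.mul_continuousOn hRc
  have h1' : IntegrableOn (fun u => r u * ∫ w in (0:ℝ)..u, r w) (Set.Ioc 0 t) :=
    (intervalIntegrable_iff_integrableOn_Ioc_of_le ht).mp h1
  have hr' : IntegrableOn r (Set.Ioc 0 t) :=
    (intervalIntegrable_iff_integrableOn_Ioc_of_le ht).mp hr
  have h2' : IntegrableOn (fun u => r u * ∫ w in u..t, r w) (Set.Ioc 0 t) := by
    apply IntegrableOn.congr_fun
      ((hr'.mul_const (∫ w in (0:ℝ)..t, r w)).sub h1') ?_ measurableSet_Ioc
    intro u hu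
    simp only [Pi.sub_apply]
    rw [interval_sub hu.1.le hu.2 hr, mul_sub]
  rw [intervalIntegral.integral_of_le ht, intervalIntegral.integral_of_le ht]
  set R : ℝ → ℝ := fun s => ∫ w in (0:ℝ)..s, r w with hR
  have step1 : (∫ u in Set.Ioc 0 t, r u) * R t = ∫ u in Set.Ioc 0 t, r u * R t :=
    (integral_mul_const _ _).symm
  have step2 : ∫ u in Set.Ioc 0 t, r u * R t
      = (∫ u in Set.Ioc 0 t, r u * R u) + ∫ u in Set.Ioc 0 t, r u * ∫ w in u..t, r w := by
    rw [← integral_add h1' h2']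
    refine setIntegral_congr_fun measurableSet_Ioc ?_
    intro u hu
    simp only [hR]
    rw [interval_sub hu.1.le hu.2 hr]
    ring
  have step3 : ∫ u in Set.Ioc 0 t, r u * ∫ w in u..t, r w
      = ∫ u in Set.Ioc 0 t, r u * R u := by
    have e1 : ∫ u in Set.Ioc 0 t, r u * ∫ w in u..t, r w
        = ∫ u in Set.Ioc 0 t, r u * ∫ w in Set.Ioc u t, r w := by
      refine setIntegral_congr_fun measurableSet_Ioc ?_
      intro u hu
      dsimp only
      rw [intervalIntegral.integral_of_le hu.2]
    rw [e1, triangle_swap hr' hr']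
    refine setIntegral_congr_fun measurableSet_Ioc ?_
    intro w hw
    simp only [hR]
    rw [intervalIntegral.integral_of_le hw.1.le]
    ring
  have hRt : R t = ∫ u in Set.Ioc 0 t, r u := intervalIntegral.integral_of_le ht
  calc (∫ u in Set.Ioc 0 t, r u)^2 = (∫ u in Set.Ioc 0 t, r u) * R t := by rw [hRt]; ring
    _ = (∫ u in Set.Ioc 0 t, r u * R u) + ∫ u in Set.Ioc 0 t, r u * ∫ w in u..t, r w := by
        rw [step1, step2]
    _ = 2 * ∫ u in Set.Ioc 0 t, r u * R u := by rw [step3]; ring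

lemma lin_identity {t l : ℝ} (ht : 0 ≤ t) {r : ℝ → ℝ}
    (hr : IntervalIntegrable r volume 0 t) :
    Real.exp (-(2*l)*t) * (∫ u in (0:ℝ)..t, r u)
      + 2*l * (∫ s in (0:ℝ)..t, Real.exp (-(2*l)*s) * (∫ u in (0:ℝ)..s, r u))
      = ∫ s in (0:ℝ)..t, Real.exp (-(2*l)*s) * r s := by
  set e : ℝ → ℝ := fun s => Real.exp (-(2*l)*s) with he
  have hec : Continuous e := by
    apply Real.continuous_exp.comp; continuity
  set R : ℝ → ℝ := fun s => ∫ u in (0:ℝ)..s, r u with hR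
  have hRc : ContinuousOn R (Set.uIcc 0 t) :=
    intervalIntegral.continuousOn_primitive_interval' hr Set.left_mem_uIcc
  have hr' : IntegrableOn r (Set.Ioc 0 t) :=
    (intervalIntegrable_iff_integrableOn_Ioc_of_le ht).mp hr
  have her' : IntegrableOn (fun u => e u * r u) (Set.Ioc 0 t) :=
    (intervalIntegrable_iff_integrableOn_Ioc_of_le ht).mp
      (hr.continuousOn_mul hec.continuousOn)
  have heR : IntervalIntegrable (fun s => e s * R s) volume 0 t :=
    ((hec.continuousOn).mul hRc).intervalIntegrable
  have heR' : IntegrableOn (fun s => e s * R s) (Set.Ioc 0 t) :=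
    (intervalIntegrable_iff_integrableOn_Ioc_of_le ht).mp heR
  have hG' : IntegrableOn (fun w => 2*l*e w) (Set.Ioc 0 t) :=
    ((continuous_const.mul hec).continuousOn.intervalIntegrable.mono_set
      (le_refl _) |> (intervalIntegrable_iff_integrableOn_Ioc_of_le ht).mp)
  have swap := triangle_swap (t := t) (F := r) (G := fun w => 2*l*e w) hr' hG'
  -- left side of swap
  have L : ∫ u in Set.Ioc 0 t, r u * ∫ w in Set.Ioc u t, 2*l*e w
      = (∫ u in Set.Ioc 0 t, e u * r u) - Real.exp (-(2*l)*t) * ∫ u in Set.Ioc 0 t, r u := by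
    have e1 : ∀ u ∈ Set.Ioc (0:ℝ) t,
        r u * (∫ w in Set.Ioc u t, 2*l*e w) = e u * r u - r u * Real.exp (-(2*l)*t) := by
      intro u hu
      have : ∫ w in Set.Ioc u t, 2*l*e w = ∫ w in u..t, 2*l* e w :=
        (intervalIntegral.integral_of_le hu.2).symm
      rw [this]
      have := exp_integral l u t
      simp only [he]
      rw [show (fun w => 2*l*Real.exp (-(2*l)*w)) = fun w => 2*l*Real.exp (-(2*l)*w) from rfl]
      rw [this]
      ring
    rw [setIntegral_congr_fun measurableSet_Ioc e1, integral_sub her' (hr'.mul_const _),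
      integral_mul_const]
    ring
  -- right side of swap
  have Rr : ∫ w in Set.Ioc 0 t, (∫ u in Set.Ioc 0 w, r u) * (2*l*e w)
      = 2*l* ∫ s in Set.Ioc 0 t, e s * R s := by
    rw [← integral_const_mul]
    refine setIntegral_congr_fun measurableSet_Ioc ?_
    intro w hw
    simp only [hR]
    rw [intervalIntegral.integral_of_le hw.1.le]
    ring
  rw [intervalIntegral.integral_of_le ht, intervalIntegral.integral_of_le ht,
    intervalIntegral.integral_of_le ht]
  have hRt : R t = ∫ u in Set.Ioc 0 t, r u := intervalIntegral.integral_of_le ht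
  have := swap
  rw [L, Rr] at this
  -- goal: e t * ∫Ioc r + 2l * ∫Ioc e*R = ∫Ioc e*r
  simp only [he] at this ⊢
  linarith [this]

lemma mode_energy {t l a₀ : ℝ} (ht : 0 ≤ t) (hl : 0 ≤ l)
    {q : ℝ → ℝ} (hq : IntervalIntegrable q volume 0 t)
    {a : ℝ → ℝ}
    (ha : ∀ s ∈ Set.Icc (0:ℝ) t, a s
       = Real.exp (-l * s) * a₀ + ∫ u in (0:ℝ)..s, Real.exp (-l*(s-u)) * q u) :
    (a t)^2 ≤ a₀^2 + 2 * ∫ s in (0:ℝ)..t, q s * a s := by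
  have hexpc : Continuous fun u : ℝ => Real.exp (l*u) := by continuity
  have hE2c : Continuous fun s : ℝ => Real.exp (-(2*l)*s) := by continuity
  have hr : IntervalIntegrable (fun u => Real.exp (l*u) * q u) volume 0 t :=
    hq.continuousOn_mul hexpc.continuousOn
  set r : ℝ → ℝ := fun u => Real.exp (l*u) * q u with hrdef
  set R : ℝ → ℝ := fun s => ∫ u in (0:ℝ)..s, r u with hRdef
  have hRs : ∀ s, (∫ u in (0:ℝ)..s, r u) = R s := fun s => rfl
  have hRc : ContinuousOn R (Set.uIcc 0 t) :=
    intervalIntegral.continuousOn_primitive_interval' hr Set.left_mem_uIcc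
  have ha' : ∀ s ∈ Set.Icc (0:ℝ) t, a s = Real.exp (-l*s) * (a₀ + R s) := by
    intro s hs
    rw [ha s hs, mul_add]
    congr 1
    have hptw : ∀ u, Real.exp (-l*(s-u)) * q u = Real.exp (-l*s) * r u := by
      intro u
      rw [hrdef]
      dsimp only
      rw [← mul_assoc, ← Real.exp_add]
      congr 2
      ring
    rw [intervalIntegral.integral_congr (g := fun u => Real.exp (-l*s) * r u)
      (fun u _ => hptw u), intervalIntegral.integral_const_mul, hRs]
  -- integrability facts
  have hrR : IntervalIntegrable (fun u => r u * R u) volume 0 t := hr.mul_continuousOn hRc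
  have I2 : IntervalIntegrable (fun s => Real.exp (-(2*l)*s) * R s) volume 0 t :=
    (hE2c.continuousOn.mul hRc).intervalIntegrable
  have I3 : IntervalIntegrable (fun s => Real.exp (-(2*l)*s) * (R s)^2) volume 0 t :=
    (hE2c.continuousOn.mul (hRc.pow 2)).intervalIntegrable
  have I0 : IntervalIntegrable (fun s : ℝ => Real.exp (-(2*l)*s)) volume 0 t :=
    hE2c.intervalIntegrable 0 t
  have I4 : IntervalIntegrable (fun s => Real.exp (-(2*l)*s) * r s) volume 0 t :=
    hr.continuousOn_mul hE2c.continuousOn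
  have I5 : IntervalIntegrable (fun s => Real.exp (-(2*l)*s) * (r s * R s)) volume 0 t :=
    hrR.continuousOn_mul hE2c.continuousOn
  have I6 : IntervalIntegrable (fun u => 2 * (r u * R u)) volume 0 t := hrR.const_mul 2
  -- A1
  have A1 : 2*l*(∫ s in (0:ℝ)..t, Real.exp (-(2*l)*s)) = 1 - Real.exp (-(2*l)*t) := by
    rw [← intervalIntegral.integral_const_mul]
    have := exp_integral l 0 t
    rw [this]
    norm_num
  -- A2
  have A2 := lin_identity (l := l) ht hr
  rw [hRs] at A2
  simp only [hRs] at A2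
  -- A3
  have A3 := lin_identity (l := l) ht I6
  have hsq : ∀ s ∈ Set.Icc (0:ℝ) t, (∫ u in (0:ℝ)..s, 2 * (r u * R u)) = (R s)^2 := by
    intro s hs
    rw [intervalIntegral.integral_const_mul, ← sq_primitive hs.1 (ii_left hs.1 hs.2 hr), hRs]
  rw [hsq t ⟨ht, le_rfl⟩] at A3
  have e3 : ∫ s in (0:ℝ)..t, Real.exp (-(2*l)*s) * (∫ u in (0:ℝ)..s, 2 * (r u * R u))
      = ∫ s in (0:ℝ)..t, Real.exp (-(2*l)*s) * (R s)^2 := by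
    refine intervalIntegral.integral_congr ?_
    intro s hs
    rw [Set.uIcc_of_le ht] at hs
    dsimp only
    rw [hsq s hs]
  rw [e3] at A3
  have e4 : ∫ s in (0:ℝ)..t, Real.exp (-(2*l)*s) * (2 * (r s * R s))
      = 2 * ∫ s in (0:ℝ)..t, Real.exp (-(2*l)*s) * (r s * R s) := by
    rw [← intervalIntegral.integral_const_mul]
    refine intervalIntegral.integral_congr ?_
    intro s _
    dsimp only
    ring
  rw [e4] at A3
  -- splits
  have S1 : ∫ s in (0:ℝ)..t, Real.exp (-(2*l)*s) * (a₀ + R s)^2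
      = a₀^2 * (∫ s in (0:ℝ)..t, Real.exp (-(2*l)*s))
        + 2*a₀*(∫ s in (0:ℝ)..t, Real.exp (-(2*l)*s) * R s)
        + ∫ s in (0:ℝ)..t, Real.exp (-(2*l)*s) * (R s)^2 := by
    calc ∫ s in (0:ℝ)..t, Real.exp (-(2*l)*s) * (a₀ + R s)^2
        = ∫ s in (0:ℝ)..t, (a₀^2 * Real.exp (-(2*l)*s)
            + (2*a₀*(Real.exp (-(2*l)*s) * R s) + Real.exp (-(2*l)*s) * (R s)^2)) :=
          intervalIntegral.integral_congr (fun s _ => by ring)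
      _ = (∫ s in (0:ℝ)..t, a₀^2 * Real.exp (-(2*l)*s))
            + ∫ s in (0:ℝ)..t, (2*a₀*(Real.exp (-(2*l)*s) * R s)
                + Real.exp (-(2*l)*s) * (R s)^2) :=
          intervalIntegral.integral_add (I0.const_mul _) ((I2.const_mul _).add I3)
      _ = (∫ s in (0:ℝ)..t, a₀^2 * Real.exp (-(2*l)*s))
            + ((∫ s in (0:ℝ)..t, 2*a₀*(Real.exp (-(2*l)*s) * R s))
                + ∫ s in (0:ℝ)..t, Real.exp (-(2*l)*s) * (R s)^2) := by
          rw [intervalIntegral.integral_add (I2.const_mul _) I3]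
      _ = a₀^2 * (∫ s in (0:ℝ)..t, Real.exp (-(2*l)*s))
            + 2*a₀*(∫ s in (0:ℝ)..t, Real.exp (-(2*l)*s) * R s)
            + ∫ s in (0:ℝ)..t, Real.exp (-(2*l)*s) * (R s)^2 := by
          rw [intervalIntegral.integral_const_mul, intervalIntegral.integral_const_mul]
          ring
  have S2 : ∫ s in (0:ℝ)..t, Real.exp (-(2*l)*s) * (r s * (a₀ + R s))
      = a₀ * (∫ s in (0:ℝ)..t, Real.exp (-(2*l)*s) * r s)
        + ∫ s in (0:ℝ)..t, Real.exp (-(2*l)*s) * (r s * R s) := by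
    calc ∫ s in (0:ℝ)..t, Real.exp (-(2*l)*s) * (r s * (a₀ + R s))
        = ∫ s in (0:ℝ)..t, (a₀ * (Real.exp (-(2*l)*s) * r s)
            + Real.exp (-(2*l)*s) * (r s * R s)) :=
          intervalIntegral.integral_congr (fun s _ => by ring)
      _ = (∫ s in (0:ℝ)..t, a₀ * (Real.exp (-(2*l)*s) * r s))
            + ∫ s in (0:ℝ)..t, Real.exp (-(2*l)*s) * (r s * R s) :=
          intervalIntegral.integral_add (I4.const_mul _) I5
      _ = a₀ * (∫ s in (0:ℝ)..t, Real.exp (-(2*l)*s) * r s)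
            + ∫ s in (0:ℝ)..t, Real.exp (-(2*l)*s) * (r s * R s) := by
          rw [intervalIntegral.integral_const_mul]
  -- main identity
  have M : Real.exp (-(2*l)*t) * (a₀ + R t)^2
      + 2*l*(∫ s in (0:ℝ)..t, Real.exp (-(2*l)*s) * (a₀ + R s)^2)
      = a₀^2 + 2 * ∫ s in (0:ℝ)..t, Real.exp (-(2*l)*s) * (r s * (a₀ + R s)) := by
    rw [S1, S2]
    linear_combination a₀^2 * A1 + 2*a₀*A2 + A3
  -- connect to q a
  have hqa : ∫ s in (0:ℝ)..t, q s * a s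
      = ∫ s in (0:ℝ)..t, Real.exp (-(2*l)*s) * (r s * (a₀ + R s)) := by
    refine intervalIntegral.integral_congr ?_
    intro s hs
    rw [Set.uIcc_of_le ht] at hs
    dsimp only
    rw [ha' s hs, hrdef]
    dsimp only
    rw [show Real.exp (-(2*l)*s) * (Real.exp (l*s) * q s * (a₀ + R s))
        = (Real.exp (-(2*l)*s) * Real.exp (l*s)) * (q s * (a₀ + R s)) from by ring,
      ← Real.exp_add]
    rw [show -(2*l)*s + l*s = -l*s from by ring]
    ring
  have NN : 0 ≤ ∫ s in (0:ℝ)..t, Real.exp (-(2*l)*s) * (a₀ + R s)^2 := by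
    refine intervalIntegral.integral_nonneg ht ?_
    intro s _
    positivity
  have hat : (a t)^2 = Real.exp (-(2*l)*t) * (a₀ + R t)^2 := by
    rw [ha' t ⟨ht, le_rfl⟩, mul_pow, sq (Real.exp (-l*t)), ← Real.exp_add]
    congr 2
    ring
  rw [hat, hqa]
  nlinarith [mul_nonneg hl NN]

lemma ii_mid {T s1 s2 : ℝ} {r : ℝ → ℝ} (h1 : 0 ≤ s1) (h12 : s1 ≤ s2) (h2 : s2 ≤ T)
    (hr : IntervalIntegrable r volume 0 T) : IntervalIntegrable r volume s1 s2 :=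
  ii_right h1 h12 (ii_left (h1.trans h12) h2 hr)

lemma gronwall {T A : ℝ} (hA : 0 ≤ A) (hT : 0 ≤ T) {c f : ℝ → ℝ}
    (hc : IntervalIntegrable c volume 0 T) (hc0 : ∀ s, 0 ≤ c s)
    (hcf : IntervalIntegrable (fun s => c s * f s) volume 0 T)
    (hf0 : ∀ s ∈ Set.Icc (0:ℝ) T, 0 ≤ f s)
    (hmain : ∀ t ∈ Set.Icc (0:ℝ) T, f t ≤ A + ∫ s in (0:ℝ)..t, c s * f s) :
    ∀ t ∈ Set.Icc (0:ℝ) T, f t ≤ A * Real.exp (∫ s in (0:ℝ)..t, c s) := by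
  intro t htt
  set C : ℝ → ℝ := fun s => ∫ u in (0:ℝ)..s, c u with hCdef
  set φ : ℝ → ℝ := fun s => A + ∫ u in (0:ℝ)..s, c u * f u with hφdef
  have hCc : ContinuousOn C (Set.Icc 0 T) := by
    have := intervalIntegral.continuousOn_primitive_interval' hc Set.left_mem_uIcc
    rwa [Set.uIcc_of_le hT] at this
  have hφmono : ∀ u s2, 0 ≤ u → u ≤ s2 → s2 ≤ T → φ u ≤ φ s2 := by
    intro u s2 hu hus hsT
    have hsub : ∫ w in u..s2, c w * f w
        = (∫ w in (0:ℝ)..s2, c w * f w) - ∫ w in (0:ℝ)..u, c w * f w :=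
      interval_sub hu hus (ii_left (hu.trans hus) hsT hcf)
    have hnn : 0 ≤ ∫ w in u..s2, c w * f w := by
      refine intervalIntegral.integral_nonneg hus ?_
      intro w hw
      exact mul_nonneg (hc0 w) (hf0 w ⟨hu.trans hw.1, hw.2.trans hsT⟩)
    simp only [hφdef]
    linarith [hsub ▸ hnn]
  have key : ∀ s1 s2, 0 ≤ s1 → s1 ≤ s2 → s2 ≤ T →
      φ s2 ≤ φ s1 + φ s2 * (C s2 - C s1) := by
    intro s1 s2 h1 h12 h2
    have hdiff : φ s2 - φ s1 = ∫ w in s1..s2, c w * f w := by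
      simp only [hφdef]
      rw [interval_sub h1 h12 (ii_left (h1.trans h12) h2 hcf)]
      ring
    have hCd : C s2 - C s1 = ∫ w in s1..s2, c w := by
      simp only [hCdef]
      rw [interval_sub h1 h12 (ii_left (h1.trans h12) h2 hc)]
    have hmono2 : ∫ w in s1..s2, c w * f w ≤ ∫ w in s1..s2, c w * φ s2 := by
      refine intervalIntegral.integral_mono_on h12 (ii_mid h1 h12 h2 hcf)
        ((ii_mid h1 h12 h2 hc).mul_const _) ?_
      intro w hw
      have hfw : f w ≤ φ w := hmain w ⟨h1.trans hw.1, hw.2.trans h2⟩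
      have hφw : φ w ≤ φ s2 := hφmono w s2 (h1.trans hw.1) hw.2 h2
      exact mul_le_mul_of_nonneg_left (hfw.trans hφw) (hc0 w)
    rw [intervalIntegral.integral_mul_const] at hmono2
    rw [hCd]
    linarith [hdiff ▸ hmono2]
  set x : ℝ := C t with hxdef
  have hx0 : 0 ≤ x := by
    simp only [hxdef, hCdef]
    exact intervalIntegral.integral_nonneg htt.1 (fun s _ => hc0 s)
  have hCt : C t = x := rfl
  have hC0 : C 0 = 0 := by simp [hCdef]
  -- induction over partition
  have claim : ∀ n : ℕ, x < n → φ t * (1 - x/n)^n ≤ A := by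
    intro n hn
    have hnpos : 0 < (n:ℝ) := lt_of_le_of_lt hx0 hn
    have hfrac : 0 < 1 - x/n := by
      rw [sub_pos, div_lt_one hnpos]
      exact hn
    have main : ∀ i : ℕ, i ≤ n → ∃ s, s ∈ Set.Icc 0 t ∧ C s = i * x / n
        ∧ φ s * (1 - x/n)^i ≤ A := by
      intro i hi
      induction i with
      | zero =>
        refine ⟨0, ⟨le_rfl, htt.1⟩, by simpa using hC0, ?_⟩
        have : φ 0 = A := by simp [hφdef]
        simp [this]
      | succ i ih =>
        obtain ⟨s, hs, hCs, hφs⟩ := ih (le_of_lt (Nat.lt_of_succ_le hi))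
        -- IVT on [s, t]
        have hsub : ContinuousOn C (Set.Icc s t) :=
          hCc.mono (Set.Icc_subset_Icc hs.1 (htt.2))
        have hys : C s ≤ (i+1) * x / n := by
          rw [hCs]
          have : (0:ℝ) < (n:ℝ) := hnpos
          rw [div_le_div_iff₀ this this]
          nlinarith [hx0]
        have hyt : ((i:ℝ)+1) * x / n ≤ C t := by
          rw [hCt]
          rw [div_le_iff₀ hnpos]
          have : ((i:ℝ)+1) ≤ n := by exact_mod_cast hi
          nlinarith [hx0]
        have := intermediate_value_Icc hs.2 hsub
        have hmem : ((i:ℝ)+1) * x / n ∈ Set.Icc (C s) (C t) := ⟨by exact_mod_cast hys, hyt⟩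
        obtain ⟨s', hs', hCs'⟩ := this hmem
        refine ⟨s', ⟨hs.1.trans hs'.1, hs'.2⟩, by push_cast; exact hCs', ?_⟩
        have hkey := key s s' hs.1 hs'.1 (hs'.2.trans htt.2)
        have hCd : C s' - C s = x / n := by
          rw [hCs', hCs]
          push_cast
          ring
        rw [hCd] at hkey
        -- φ s' * (1 - x/n) ≤ φ s
        have h2 : φ s' * (1 - x/n) ≤ φ s := by linarith
        calc φ s' * (1 - x/n)^(i+1) = (φ s' * (1 - x/n)) * (1 - x/n)^i := by ring
          _ ≤ φ s * (1 - x/n)^i := by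
              apply mul_le_mul_of_nonneg_right h2 (le_of_lt (pow_pos hfrac i))
          _ ≤ A := hφs
    obtain ⟨s, hs, hCs, hφs⟩ := main n le_rfl
    have hCsx : C s = x := by
      rw [hCs]
      field_simp
    have hkey := key s t hs.1 hs.2 htt.2
    rw [hCsx, hCt, sub_self, mul_zero, add_zero] at hkey
    calc φ t * (1 - x/n)^n ≤ φ s * (1 - x/n)^n := by
          apply mul_le_mul_of_nonneg_right hkey (le_of_lt (pow_pos hfrac n))
      _ ≤ A := hφs
  -- pass to the limit
  have htend : Filter.Tendsto (fun n : ℕ => φ t * (1 - x/n)^n) Filter.atTop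
      (nhds (φ t * Real.exp (-x))) := by
    have h1 := Real.tendsto_one_add_div_pow_exp (-x)
    have h2 : (fun n : ℕ => (1 + (-x)/n)^n) = fun n : ℕ => (1 - x/n)^n := by
      funext n
      congr 1
      ring
    rw [h2] at h1
    exact h1.const_mul (φ t)
  have hev : ∀ᶠ n : ℕ in Filter.atTop, φ t * (1 - x/n)^n ≤ A := by
    filter_upwards [Filter.eventually_gt_atTop (Nat.ceil x)] with n hn
    exact claim n (lt_of_le_of_lt (Nat.le_ceil x) (by exact_mod_cast hn))
  have hlim : φ t * Real.exp (-x) ≤ A := le_of_tendsto htend hev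
  have hft : f t ≤ φ t := hmain t htt
  have hexp : 0 < Real.exp (-x) := Real.exp_pos _
  have hxp : 0 < Real.exp x := Real.exp_pos _
  have : φ t ≤ A * Real.exp x := by
    rw [Real.exp_neg] at hlim
    calc φ t = φ t * (Real.exp x)⁻¹ * Real.exp x := by field_simp
      _ ≤ A * Real.exp x := mul_le_mul_of_nonneg_right hlim hxp.le
  exact hft.trans this

variable {X : Type*} [NormedAddCommGroup X] [InnerProductSpace ℝ X]

lemma parseval_sq (φ : HilbertBasis ℕ ℝ X) (x : X) :
    HasSum (fun k => ⟪x, φ k⟫^2) (‖x‖^2) := by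
  have h := φ.hasSum_inner_mul_inner x x
  have e : (fun k => ⟪x, φ k⟫ * ⟪φ k, x⟫) = fun k => ⟪x, φ k⟫^2 := by
    funext k
    rw [real_inner_comm (φ k) x, sq]
  rw [e] at h
  rwa [real_inner_self_eq_norm_sq] at h

lemma parseval_mul (φ : HilbertBasis ℕ ℝ X) (x y : X) :
    HasSum (fun k => ⟪x, φ k⟫ * ⟪y, φ k⟫) ⟪x, y⟫ := by
  have h := φ.hasSum_inner_mul_inner x y
  have e : (fun k => ⟪x, φ k⟫ * ⟪φ k, y⟫) = fun k => ⟪x, φ k⟫ * ⟪y, φ k⟫ := by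
    funext k
    rw [real_inner_comm (φ k) y]
  rwa [e] at h

lemma bessel_partial (φ : HilbertBasis ℕ ℝ X) (x : X) (s : Finset ℕ) :
    ∑ k ∈ s, ⟪x, φ k⟫^2 ≤ ‖x‖^2 :=
  sum_le_hasSum s (fun k _ => sq_nonneg _) (parseval_sq φ x)

lemma cs_partial (φ : HilbertBasis ℕ ℝ X) (x y : X) (s : Finset ℕ) :
    ∑ k ∈ s, |⟪x, φ k⟫| * |⟪y, φ k⟫| ≤ ‖x‖ * ‖y‖ := by
  have h := Real.sum_mul_le_sqrt_mul_sqrt s (fun k => |⟪x, φ k⟫|) (fun k => |⟪y, φ k⟫|)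
  have hx : Real.sqrt (∑ k ∈ s, |⟪x, φ k⟫|^2) ≤ ‖x‖ := by
    rw [show (∑ k ∈ s, |⟪x, φ k⟫|^2) = ∑ k ∈ s, ⟪x, φ k⟫^2 from by
      refine Finset.sum_congr rfl (fun k _ => sq_abs _)]
    rw [show ‖x‖ = Real.sqrt (‖x‖^2) from (Real.sqrt_sq (norm_nonneg x)).symm]
    exact Real.sqrt_le_sqrt (bessel_partial φ x s)
  have hy : Real.sqrt (∑ k ∈ s, |⟪y, φ k⟫|^2) ≤ ‖y‖ := by
    rw [show (∑ k ∈ s, |⟪y, φ k⟫|^2) = ∑ k ∈ s, ⟪y, φ k⟫^2 from by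
      refine Finset.sum_congr rfl (fun k _ => sq_abs _)]
    rw [show ‖y‖ = Real.sqrt (‖y‖^2) from (Real.sqrt_sq (norm_nonneg y)).symm]
    exact Real.sqrt_le_sqrt (bessel_partial φ y s)
  refine h.trans (mul_le_mul hx hy (Real.sqrt_nonneg _) (norm_nonneg x))

lemma cs_summable (φ : HilbertBasis ℕ ℝ X) (x y : X) :
    Summable (fun k => |⟪x, φ k⟫| * |⟪y, φ k⟫|) :=
  summable_of_sum_range_le (fun k => mul_nonneg (abs_nonneg _) (abs_nonneg _))
    (fun n => cs_partial φ x y (Finset.range n))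

lemma cs_tsum (φ : HilbertBasis ℕ ℝ X) (x y : X) :
    ∑' k, |⟪x, φ k⟫| * |⟪y, φ k⟫| ≤ ‖x‖ * ‖y‖ :=
  Summable.tsum_le_of_sum_range_le (cs_summable φ x y) (fun n => cs_partial φ x y (Finset.range n))

lemma p_integrable {T : ℝ} (hT : 0 ≤ T) {p : ℝ → ℝ} (hpm : Measurable p)
    (hp2 : IntervalIntegrable (fun s => p s^2) volume 0 T) :
    IntervalIntegrable p volume 0 T := by
  rw [intervalIntegrable_iff_integrableOn_Ioc_of_le hT] at hp2 ⊢
  have hbd : Integrable (fun s => (1/2 : ℝ) * (1 + p s^2))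
      (volume.restrict (Set.Ioc 0 T)) := by
    refine Integrable.const_mul ?_ _
    exact (integrableOn_const measure_Ioc_lt_top.ne).add hp2
  refine Integrable.mono' hbd (hpm.aestronglyMeasurable.restrict) ?_
  refine Filter.Eventually.of_forall (fun s => ?_)
  rw [Real.norm_eq_abs]
  nlinarith [sq_nonneg (|p s| - 1), sq_abs (p s), abs_nonneg (p s)]

lemma l2_cs {T : ℝ} (hT : 0 ≤ T) {p : ℝ → ℝ}
    (hpI : IntervalIntegrable p volume 0 T)
    (hp2 : IntervalIntegrable (fun s => p s^2) volume 0 T) :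
    ∫ s in (0:ℝ)..T, |p s| ≤ Real.sqrt T * Real.sqrt (∫ s in (0:ℝ)..T, p s^2) := by
  rcases eq_or_lt_of_le hT with h0 | hTpos
  · rw [← h0]
    simp
  set P := ∫ s in (0:ℝ)..T, |p s| with hPdef
  set I2 := ∫ s in (0:ℝ)..T, p s^2 with hI2def
  have hP0 : 0 ≤ P := intervalIntegral.integral_nonneg hT (fun s _ => abs_nonneg _)
  have hI20 : 0 ≤ I2 := intervalIntegral.integral_nonneg hT (fun s _ => sq_nonneg _)
  set m := P / T with hmdef
  have hexp : 0 ≤ ∫ s in (0:ℝ)..T, (|p s| - m)^2 :=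
    intervalIntegral.integral_nonneg hT (fun s _ => sq_nonneg _)
  have hsplit : ∫ s in (0:ℝ)..T, (|p s| - m)^2 = I2 - 2*m*P + m^2*T := by
    have e1 : ∀ s, (|p s| - m)^2 = p s^2 - 2*m*|p s| + m^2 := by
      intro s
      have : |p s|^2 = p s^2 := sq_abs _
      nlinarith [this]
    calc ∫ s in (0:ℝ)..T, (|p s| - m)^2
        = ∫ s in (0:ℝ)..T, (p s^2 - 2*m*|p s| + m^2) :=
          intervalIntegral.integral_congr (fun s _ => e1 s)
      _ = (∫ s in (0:ℝ)..T, (p s^2 - 2*m*|p s|)) + ∫ s in (0:ℝ)..T, (fun _ => m^2) s :=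
          intervalIntegral.integral_add (hp2.sub (hpI.abs.const_mul _)) intervalIntegrable_const
      _ = ((∫ s in (0:ℝ)..T, p s^2) - ∫ s in (0:ℝ)..T, 2*m*|p s|) + ∫ s in (0:ℝ)..T, (fun _ => m^2) s := by
          rw [intervalIntegral.integral_sub hp2 (hpI.abs.const_mul _)]
      _ = I2 - 2*m*P + m^2*T := by
          rw [intervalIntegral.integral_const_mul, intervalIntegral.integral_const]
          simp [hPdef, hI2def]
          ring
  have hkey : P^2 ≤ T * I2 := by
    have h := hexp
    rw [hsplit] at h
    have hmP : m * T = P := by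
      rw [hmdef]
      field_simp
    nlinarith [h, hTpos, sq_nonneg (m*T - P)]
  calc P = Real.sqrt (P^2) := (Real.sqrt_sq hP0).symm
    _ ≤ Real.sqrt (T * I2) := Real.sqrt_le_sqrt hkey
    _ = Real.sqrt T * Real.sqrt I2 := Real.sqrt_mul hT _

end EnergyAux

/-- Uniform energy estimate for the mild solution of the nonlinear bilinear system
`v' + Av + p(t)Bv + p(t)Bφ₁ = 0`, `v(0) = v₀`. -/
theorem energy_estimate_nonlinear
    {X : Type*} [NormedAddCommGroup X] [InnerProductSpace ℝ X] [CompleteSpace X]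
    [TopologicalSpace.SeparableSpace X]
    (φ : HilbertBasis ℕ ℝ X)
    (lam : ℕ → ℝ) (hlam0 : ∀ k, 0 ≤ lam k) (hmono : Monotone lam)
    (B : X →L[ℝ] X) (CB : ℝ) (hCB : 1 ≤ CB) (hBnorm : ‖B‖ ≤ CB)
    (T : ℝ) (hT : 0 < T)
    (p : ℝ → ℝ) (hpm : Measurable p)
    (hp2 : IntervalIntegrable (fun s => p s ^ 2) volume 0 T)
    (v₀ : X) (v : ℝ → X) (hv : ContinuousOn v (Set.Icc 0 T))
    (heq : ∀ (k : ℕ), ∀ t ∈ Set.Icc (0:ℝ) T,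
      ⟪v t, φ k⟫ =
        Real.exp (-lam k * t) * ⟪v₀, φ k⟫ -
          ∫ s in (0:ℝ)..t, Real.exp (-lam k * (t - s)) * p s * ⟪B (v s + φ 0), φ k⟫) :
    ∀ t ∈ Set.Icc (0:ℝ) T,
      ‖v t‖ ^ 2 ≤
        Real.exp (CB * (2 * Real.sqrt T * Real.sqrt (∫ s in (0:ℝ)..T, p s ^ 2) + T)) *
          (‖v₀‖ ^ 2 + CB * ∫ s in (0:ℝ)..T, p s ^ 2) := by
  have hT0 : (0:ℝ) ≤ T := hT.le
  have hCB0 : (0:ℝ) ≤ CB := le_trans zero_le_one hCB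
  have hpI : IntervalIntegrable p volume 0 T := p_integrable hT0 hpm hp2
  have hpI' : IntegrableOn p (Set.Ioc 0 T) :=
    (intervalIntegrable_iff_integrableOn_Ioc_of_le hT0).mp hpI
  -- continuity facts
  have hwc : ContinuousOn (fun s => v s + φ 0) (Set.Icc 0 T) := hv.add continuousOn_const
  have hBwc : ContinuousOn (fun s => B (v s + φ 0)) (Set.Icc 0 T) :=
    B.continuous.comp_continuousOn hwc
  have hbc : ∀ k : ℕ, ContinuousOn (fun s => ⟪B (v s + φ 0), φ k⟫) (Set.Icc 0 T) :=
    fun k => hBwc.inner continuousOn_const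
  have hac : ∀ k : ℕ, ContinuousOn (fun s => ⟪v s, φ k⟫) (Set.Icc 0 T) :=
    fun k => hv.inner continuousOn_const
  have hIc : ContinuousOn (fun s => ⟪B (v s + φ 0), v s⟫) (Set.Icc 0 T) := hBwc.inner hv
  -- sup bound
  obtain ⟨M0, hM0⟩ := (isCompact_Icc : IsCompact (Set.Icc (0:ℝ) T)).exists_bound_of_continuousOn hv
  set M : ℝ := max M0 0 with hMdef
  have hM : ∀ s ∈ Set.Icc (0:ℝ) T, ‖v s‖ ≤ M := fun s hs => (hM0 s hs).trans (le_max_left _ _)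
  have hMnn : 0 ≤ M := le_max_right _ _
  have hφ1 : ‖(φ 0 : X)‖ = 1 := φ.orthonormal.1 0
  have hwb : ∀ s ∈ Set.Icc (0:ℝ) T, ‖B (v s + φ 0)‖ ≤ CB * (‖v s‖ + 1) := by
    intro s hs
    calc ‖B (v s + φ 0)‖ ≤ ‖B‖ * ‖v s + φ 0‖ := B.le_opNorm _
      _ ≤ CB * (‖v s‖ + 1) := by
          refine mul_le_mul hBnorm ?_ (norm_nonneg _) hCB0
          calc ‖v s + φ 0‖ ≤ ‖v s‖ + ‖(φ 0 : X)‖ := norm_add_le _ _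
            _ = ‖v s‖ + 1 := by rw [hφ1]
  -- abbreviations
  set f : ℝ → ℝ := fun s => ‖v s‖^2 with hfdef
  have hfc : ContinuousOn f (Set.Icc 0 T) := hv.norm.pow 2
  set c : ℝ → ℝ := fun s => 2*CB*|p s| + CB with hcdef
  have hc0 : ∀ s, 0 ≤ c s := fun s =>
    add_nonneg (mul_nonneg (by linarith) (abs_nonneg _)) hCB0
  have hcI : IntervalIntegrable c volume 0 T :=
    (hpI.abs.const_mul (2*CB)).add intervalIntegrable_const
  have hcfI : IntervalIntegrable (fun s => c s * f s) volume 0 T :=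
    hcI.mul_continuousOn (by rwa [Set.uIcc_of_le hT0])
  set A : ℝ := ‖v₀‖^2 + CB * ∫ s in (0:ℝ)..T, p s^2 with hAdef
  have hp2nn : 0 ≤ ∫ s in (0:ℝ)..T, p s^2 :=
    intervalIntegral.integral_nonneg hT0 (fun s _ => sq_nonneg _)
  have hA : 0 ≤ A := add_nonneg (sq_nonneg _) (mul_nonneg hCB0 hp2nn)
  -- q integrability
  have hqI : ∀ k : ℕ, IntervalIntegrable (fun s => -(p s * ⟪B (v s + φ 0), φ k⟫))
      volume 0 T := by
    intro k
    exact (hpI.mul_continuousOn (by rw [Set.uIcc_of_le hT0]; exact hbc k)).neg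
  -- energy inequality
  have hEnergy : ∀ t ∈ Set.Icc (0:ℝ) T, f t ≤ A + ∫ s in (0:ℝ)..t, c s * f s := by
    intro t htt
    have ht0 : 0 ≤ t := htt.1
    -- per-mode inequality
    have hmode : ∀ k : ℕ, ⟪v t, φ k⟫^2 ≤ ⟪v₀, φ k⟫^2
        + 2 * ∫ s in (0:ℝ)..t, (-(p s * ⟪B (v s + φ 0), φ k⟫)) * ⟪v s, φ k⟫ := by
      intro k
      refine mode_energy ht0 (hlam0 k) (ii_left ht0 htt.2 (hqI k))
        (a := fun s => ⟪v s, φ k⟫) ?_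
      intro s hs
      have hsT : s ∈ Set.Icc 0 T := ⟨hs.1, hs.2.trans htt.2⟩
      show ⟪v s, φ k⟫ = _
      rw [heq k s hsT, sub_eq_add_neg, ← intervalIntegral.integral_neg]
      congr 1
      refine intervalIntegral.integral_congr (fun u _ => ?_)
      ring
    -- summation
    have hconv : ∀ k : ℕ, (∫ s in (0:ℝ)..t, (-(p s * ⟪B (v s + φ 0), φ k⟫)) * ⟪v s, φ k⟫)
        = ∫ s in Set.Ioc 0 t, (-(p s * ⟪B (v s + φ 0), φ k⟫)) * ⟪v s, φ k⟫ :=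
      fun k => intervalIntegral.integral_of_le ht0
    have hsub : Set.Ioc (0:ℝ) t ⊆ Set.Icc (0:ℝ) T :=
      fun s hs => ⟨hs.1.le, hs.2.trans htt.2⟩
    have hFm : ∀ k : ℕ, AEStronglyMeasurable
        (fun s => (-(p s * ⟪B (v s + φ 0), φ k⟫)) * ⟪v s, φ k⟫)
        (volume.restrict (Set.Ioc 0 t)) := by
      intro k
      refine AEStronglyMeasurable.mul ?_ ?_
      · exact (AEStronglyMeasurable.mul (hpm.aestronglyMeasurable.restrict)
          (((hbc k).mono hsub).aestronglyMeasurable measurableSet_Ioc)).neg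
      · exact ((hac k).mono hsub).aestronglyMeasurable measurableSet_Ioc
    -- pointwise tsum bounds
    have habs : ∀ s, ∀ k : ℕ, |(-(p s * ⟪B (v s + φ 0), φ k⟫)) * ⟪v s, φ k⟫|
        = |p s| * (|⟪B (v s + φ 0), φ k⟫| * |⟪v s, φ k⟫|) := by
      intro s k
      rw [abs_mul, abs_neg, abs_mul, mul_assoc]
    have hsummable_abs : ∀ s, Summable (fun k : ℕ =>
        |(-(p s * ⟪B (v s + φ 0), φ k⟫)) * ⟪v s, φ k⟫|) := by
      intro s
      refine Summable.congr ((cs_summable φ (B (v s + φ 0)) (v s)).mul_left |p s|) ?_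
      intro k
      rw [habs s k]
    have hptw : ∀ s ∈ Set.Ioc (0:ℝ) t, ∑' k : ℕ,
        |(-(p s * ⟪B (v s + φ 0), φ k⟫)) * ⟪v s, φ k⟫|
          ≤ |p s| * (CB * (M + 1) * M) := by
      intro s hs
      have h1 : ∑' k : ℕ, |(-(p s * ⟪B (v s + φ 0), φ k⟫)) * ⟪v s, φ k⟫|
          = |p s| * ∑' k : ℕ, |⟪B (v s + φ 0), φ k⟫| * |⟪v s, φ k⟫| := by
        rw [← tsum_mul_left]
        exact tsum_congr (fun k => habs s k)
      rw [h1]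
      refine mul_le_mul_of_nonneg_left ?_ (abs_nonneg _)
      refine (cs_tsum φ _ _).trans ?_
      have h2 : ‖B (v s + φ 0)‖ ≤ CB * (M + 1) := by
        refine (hwb s (hsub hs)).trans ?_
        have := hM s (hsub hs)
        nlinarith
      exact mul_le_mul h2 (hM s (hsub hs)) (norm_nonneg _)
        (by positivity)
    -- lintegral bound
    have hpint_t : IntegrableOn (fun s => |p s| * (CB * (M + 1) * M)) (Set.Ioc 0 t) :=
      (hpI'.mono_set (Set.Ioc_subset_Ioc le_rfl htt.2)).abs.mul_const _
    have hlint : ∑' k : ℕ, ∫⁻ s in Set.Ioc 0 t,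
        ‖(-(p s * ⟪B (v s + φ 0), φ k⟫)) * ⟪v s, φ k⟫‖₊ ≠ ⊤ := by
      rw [← lintegral_tsum (f := fun k s => (‖(-(p s * ⟪B (v s + φ 0), φ k⟫)) * ⟪v s, φ k⟫‖₊ : ENNReal)) (fun k => (hFm k).enorm)]
      have hb : ∫⁻ s in Set.Ioc 0 t, (∑' k : ℕ,
          ‖(-(p s * ⟪B (v s + φ 0), φ k⟫)) * ⟪v s, φ k⟫‖₊)
            ≤ ∫⁻ s in Set.Ioc 0 t, ENNReal.ofReal (|p s| * (CB * (M + 1) * M)) := by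
        refine setLIntegral_mono' measurableSet_Ioc ?_
        intro s hs
        have he : ∑' k : ℕ, (‖(-(p s * ⟪B (v s + φ 0), φ k⟫)) * ⟪v s, φ k⟫‖₊ : ENNReal)
            = ENNReal.ofReal (∑' k : ℕ,
              |(-(p s * ⟪B (v s + φ 0), φ k⟫)) * ⟪v s, φ k⟫|) := by
          rw [ENNReal.ofReal_tsum_of_nonneg (fun k => abs_nonneg _) (hsummable_abs s)]
          refine tsum_congr (fun k => ?_)
          rw [← enorm_eq_nnnorm, ← ofReal_norm_eq_enorm, Real.norm_eq_abs]
        rw [he]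
        exact ENNReal.ofReal_le_ofReal (hptw s hs)
      refine ne_top_of_le_ne_top ?_ hb
      exact hpint_t.lintegral_lt_top.ne
    -- swap
    have hswap := integral_tsum hFm hlint
    have hSummI : Summable (fun k : ℕ => ∫ s in Set.Ioc 0 t,
        (-(p s * ⟪B (v s + φ 0), φ k⟫)) * ⟪v s, φ k⟫) := by
      refine Summable.of_norm_bounded (ENNReal.summable_toReal hlint) ?_
      intro k
      have h := norm_integral_le_lintegral_norm
        (fun s => (-(p s * ⟪B (v s + φ 0), φ k⟫)) * ⟪v s, φ k⟫)
        (μ := volume.restrict (Set.Ioc 0 t))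
      refine h.trans ?_
      refine ENNReal.toReal_mono ?_ ?_
      · exact ENNReal.ne_top_of_tsum_ne_top hlint k
      · refine lintegral_mono (fun s => ?_)
        rw [ofReal_norm_eq_enorm, enorm_eq_nnnorm]
    -- tsum of pointwise values
    have hg : ∀ s : ℝ, (∑' k : ℕ, (-(p s * ⟪B (v s + φ 0), φ k⟫)) * ⟪v s, φ k⟫)
        = -(p s) * ⟪B (v s + φ 0), v s⟫ := by
      intro s
      have h1 : (fun k : ℕ => (-(p s * ⟪B (v s + φ 0), φ k⟫)) * ⟪v s, φ k⟫)
          = fun k : ℕ => -(p s) * (⟪B (v s + φ 0), φ k⟫ * ⟪v s, φ k⟫) := by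
        funext k
        ring
      rw [h1, tsum_mul_left, ((parseval_mul φ (B (v s + φ 0)) (v s)).tsum_eq :)]
    -- combine
    have hchain : f t ≤ ‖v₀‖^2 + 2 * ∫ s in Set.Ioc 0 t, -(p s) * ⟪B (v s + φ 0), v s⟫ := by
      have h0 : f t = ∑' k : ℕ, ⟪v t, φ k⟫^2 := (parseval_sq φ (v t)).tsum_eq.symm
      have h1 : ∑' k : ℕ, ⟪v t, φ k⟫^2 ≤ ∑' k : ℕ, (⟪v₀, φ k⟫^2
          + 2 * ∫ s in Set.Ioc 0 t, (-(p s * ⟪B (v s + φ 0), φ k⟫)) * ⟪v s, φ k⟫) := by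
        refine Summable.tsum_le_tsum ?_ (parseval_sq φ (v t)).summable
          ((parseval_sq φ v₀).summable.add (hSummI.mul_left 2))
        intro k
        have := hmode k
        rwa [hconv k] at this
      have h2 : ∑' k : ℕ, (⟪v₀, φ k⟫^2
          + 2 * ∫ s in Set.Ioc 0 t, (-(p s * ⟪B (v s + φ 0), φ k⟫)) * ⟪v s, φ k⟫)
          = ‖v₀‖^2 + 2 * ∑' k : ℕ, ∫ s in Set.Ioc 0 t,
              (-(p s * ⟪B (v s + φ 0), φ k⟫)) * ⟪v s, φ k⟫ := by
        rw [Summable.tsum_add (parseval_sq φ v₀).summable (hSummI.mul_left 2),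
          (parseval_sq φ v₀).tsum_eq, tsum_mul_left]
      have h3 : ∑' k : ℕ, ∫ s in Set.Ioc 0 t,
          (-(p s * ⟪B (v s + φ 0), φ k⟫)) * ⟪v s, φ k⟫
          = ∫ s in Set.Ioc 0 t, -(p s) * ⟪B (v s + φ 0), v s⟫ := by
        rw [← hswap]
        refine integral_congr_ae (Filter.Eventually.of_forall (fun s => hg s))
      rw [h0]
      refine h1.trans ?_
      rw [h2, h3]
    -- bound the integral
    have hint2 : ∫ s in Set.Ioc 0 t, -(p s) * ⟪B (v s + φ 0), v s⟫
        = ∫ s in (0:ℝ)..t, -(p s) * ⟪B (v s + φ 0), v s⟫ :=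
      (intervalIntegral.integral_of_le ht0).symm
    have hbound : 2 * ∫ s in (0:ℝ)..t, -(p s) * ⟪B (v s + φ 0), v s⟫
        ≤ (∫ s in (0:ℝ)..t, c s * f s) + CB * ∫ s in (0:ℝ)..t, p s^2 := by
      have hII1 : IntervalIntegrable (fun s => 2 * (-(p s) * ⟪B (v s + φ 0), v s⟫))
          volume 0 t := by
        refine IntervalIntegrable.const_mul ?_ 2
        refine ((ii_left ht0 htt.2 hpI).neg).mul_continuousOn ?_
        rw [Set.uIcc_of_le ht0]
        exact hIc.mono (Set.Icc_subset_Icc le_rfl htt.2)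
      have hII2 : IntervalIntegrable (fun s => c s * f s + CB * p s^2) volume 0 t :=
        (ii_left ht0 htt.2 hcfI).add ((ii_left ht0 htt.2 hp2).const_mul CB)
      have hmono := intervalIntegral.integral_mono_on ht0 hII1 hII2 ?_
      · rw [intervalIntegral.integral_const_mul] at hmono
        rw [intervalIntegral.integral_add (ii_left ht0 htt.2 hcfI)
          ((ii_left ht0 htt.2 hp2).const_mul CB), intervalIntegral.integral_const_mul]
          at hmono
        linarith
      · intro s hs
        have hsT : s ∈ Set.Icc (0:ℝ) T := ⟨hs.1, hs.2.trans htt.2⟩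
        have hI : |⟪B (v s + φ 0), v s⟫| ≤ (CB * (‖v s‖ + 1)) * ‖v s‖ := by
          refine (abs_real_inner_le_norm _ _).trans ?_
          exact mul_le_mul_of_nonneg_right (hwb s hsT) (norm_nonneg _)
        have h1 : -(p s) * ⟪B (v s + φ 0), v s⟫ ≤ |p s| * ((CB * (‖v s‖ + 1)) * ‖v s‖) := by
          calc -(p s) * ⟪B (v s + φ 0), v s⟫ ≤ |(-(p s)) * ⟪B (v s + φ 0), v s⟫| := le_abs_self _
            _ = |p s| * |⟪B (v s + φ 0), v s⟫| := by rw [abs_mul, abs_neg]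
            _ ≤ |p s| * ((CB * (‖v s‖ + 1)) * ‖v s‖) :=
                mul_le_mul_of_nonneg_left hI (abs_nonneg _)
        have h2 : 2 * (|p s| * ‖v s‖) ≤ p s^2 + ‖v s‖^2 := by
          nlinarith [sq_nonneg (|p s| - ‖v s‖), sq_abs (p s)]
        have h2' : CB * (2 * (|p s| * ‖v s‖)) ≤ CB * (p s^2 + ‖v s‖^2) :=
          mul_le_mul_of_nonneg_left h2 hCB0
        simp only [hcdef, hfdef]
        nlinarith [h1, h2', abs_nonneg (p s), norm_nonneg (v s)]
    have hp2t : ∫ s in (0:ℝ)..t, p s^2 ≤ ∫ s in (0:ℝ)..T, p s^2 := by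
      have hnn : 0 ≤ ∫ s in t..T, p s^2 :=
        intervalIntegral.integral_nonneg htt.2 (fun s _ => sq_nonneg _)
      have := interval_sub ht0 htt.2 hp2
      linarith
    rw [hint2] at hchain
    have : CB * ∫ s in (0:ℝ)..t, p s^2 ≤ CB * ∫ s in (0:ℝ)..T, p s^2 :=
      mul_le_mul_of_nonneg_left hp2t hCB0
    simp only [hAdef]
    linarith
  -- Gronwall
  have hf0 : ∀ s ∈ Set.Icc (0:ℝ) T, 0 ≤ f s := fun s _ => sq_nonneg _
  have hG := gronwall hA hT0 hcI hc0 hcfI hf0 hEnergy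
  intro t htt
  have h1 := hG t htt
  -- bound the exponent
  have hct : ∫ s in (0:ℝ)..t, c s ≤ ∫ s in (0:ℝ)..T, c s := by
    have hnn : 0 ≤ ∫ s in t..T, c s :=
      intervalIntegral.integral_nonneg htt.2 (fun s _ => hc0 s)
    have := interval_sub htt.1 htt.2 hcI
    linarith
  have hCT : ∫ s in (0:ℝ)..T, c s = 2*CB*(∫ s in (0:ℝ)..T, |p s|) + CB*T := by
    simp only [hcdef]
    rw [intervalIntegral.integral_add (hpI.abs.const_mul (2*CB)) intervalIntegrable_const,
      intervalIntegral.integral_const_mul, intervalIntegral.integral_const]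
    simp
    ring
  have hPcs := l2_cs hT0 hpI hp2
  have hexp : ∫ s in (0:ℝ)..t, c s
      ≤ CB * (2 * Real.sqrt T * Real.sqrt (∫ s in (0:ℝ)..T, p s ^ 2) + T) := by
    have h2 : 2*CB*(∫ s in (0:ℝ)..T, |p s|)
        ≤ 2*CB*(Real.sqrt T * Real.sqrt (∫ s in (0:ℝ)..T, p s^2)) :=
      mul_le_mul_of_nonneg_left hPcs (by linarith)
    calc ∫ s in (0:ℝ)..t, c s ≤ ∫ s in (0:ℝ)..T, c s := hct
      _ = 2*CB*(∫ s in (0:ℝ)..T, |p s|) + CB*T := hCT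
      _ ≤ 2*CB*(Real.sqrt T * Real.sqrt (∫ s in (0:ℝ)..T, p s^2)) + CB*T := by linarith
      _ = CB * (2 * Real.sqrt T * Real.sqrt (∫ s in (0:ℝ)..T, p s ^ 2) + T) := by ring
  calc ‖v t‖^2 = f t := rfl
    _ ≤ A * Real.exp (∫ s in (0:ℝ)..t, c s) := h1
    _ ≤ A * Real.exp (CB * (2 * Real.sqrt T * Real.sqrt (∫ s in (0:ℝ)..T, p s ^ 2) + T)) :=
        mul_le_mul_of_nonneg_left (Real.exp_le_exp.mpr hexp) hA
    _ = Real.exp (CB * (2 * Real.sqrt T * Real.sqrt (∫ s in (0:ℝ)..T, p s ^ 2) + T)) *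
          (‖v₀‖ ^ 2 + CB * ∫ s in (0:ℝ)..T, p s ^ 2) := by
        rw [hAdef]
        ring
end

section
/- Let X be a separable real Hilbert space with inner product ⟨·,·⟩ and Hilbert (orthonormal) basis (φ_k)_{k≥1}, let (λ_k)_{k≥1} be a nondecreasing sequence of nonnegative real numbers, let B : X → X be a bounded linear operator with operator norm at most C_B, let T > 0, p ∈ L²((0,T);ℝ), let v : [0,T] → X be a continuous function, and let w : [0,T] → X be a continuous function satisfying, for every k ≥ 1 and every t ∈ [0,T], ⟨w(t), φ_k⟩ = − ∫₀^t e^{−λ_k(t−s)} p(s) ⟨B v(s), φ_k⟩ ds. Then sup_{t∈[0,T]} ‖w(t)‖² ≤ C_B² e^{T} ‖p‖²_{L²(0,T)} · sup_{t∈[0,T]} ‖v(t)‖². -/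
open MeasureTheory
open scoped RealInnerProductSpace

/-- Cauchy–Schwarz inequality for real integrals. -/
lemma cs_integral {α : Type*} [MeasurableSpace α] {μ : Measure α} {f g : α → ℝ}
    (hf : Integrable (fun a => f a ^ 2) μ) (hg : Integrable (fun a => g a ^ 2) μ)
    (hfg : Integrable (fun a => f a * g a) μ) :
    (∫ a, f a * g a ∂μ) ^ 2 ≤ (∫ a, f a ^ 2 ∂μ) * (∫ a, g a ^ 2 ∂μ) := by
  have key : ∀ x : ℝ,
      0 ≤ (∫ a, g a ^ 2 ∂μ) * (x * x) + (2 * ∫ a, f a * g a ∂μ) * x + ∫ a, f a ^ 2 ∂μ := by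
    intro x
    have h0 : 0 ≤ ∫ a, (x * g a + f a) ^ 2 ∂μ := integral_nonneg fun a => sq_nonneg _
    have hrw : ∫ a, (x * g a + f a) ^ 2 ∂μ
        = x ^ 2 * (∫ a, g a ^ 2 ∂μ) + (2 * x) * (∫ a, f a * g a ∂μ) + ∫ a, f a ^ 2 ∂μ := by
      have : (fun a => (x * g a + f a) ^ 2)
          = fun a => x ^ 2 * g a ^ 2 + (2 * x) * (f a * g a) + f a ^ 2 := by
        funext a; ring
      have h1 : Integrable (fun a => x ^ 2 * g a ^ 2 + (2 * x) * (f a * g a)) μ :=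
        (hg.const_mul _).add (hfg.const_mul _)
      have h2 : Integrable (fun a => x ^ 2 * g a ^ 2) μ := hg.const_mul _
      have h3 : Integrable (fun a => (2 * x) * (f a * g a)) μ := hfg.const_mul _
      rw [this, integral_add h1 hf, integral_add h2 h3, integral_const_mul,
        integral_const_mul]
    nlinarith [h0, hrw]
  have hd := discrim_le_zero key
  rw [discrim] at hd
  nlinarith [hd]

lemma summable_inner_sq {X : Type*} [NormedAddCommGroup X] [InnerProductSpace ℝ X]
    (φ : HilbertBasis ℕ ℝ X) (x : X) : Summable (fun k => ⟪x, φ k⟫ ^ 2) := by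
  have h := φ.summable_inner_mul_inner x x
  have : (fun k => ⟪x, φ k⟫ * ⟪φ k, x⟫) = fun k => ⟪x, φ k⟫ ^ 2 := by
    funext k; rw [sq, real_inner_comm (φ k) x]
  rwa [this] at h

lemma parseval_sq_s7 {X : Type*} [NormedAddCommGroup X] [InnerProductSpace ℝ X] [CompleteSpace X]
    (φ : HilbertBasis ℕ ℝ X) (x : X) : ∑' k, ⟪x, φ k⟫ ^ 2 = ‖x‖ ^ 2 := by
  have h := φ.tsum_inner_mul_inner x x
  have h2 : (fun k => ⟪x, φ k⟫ * ⟪φ k, x⟫) = fun k => ⟪x, φ k⟫ ^ 2 := by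
    funext k; rw [sq, real_inner_comm (φ k) x]
  rw [h2] at h
  rw [h, real_inner_self_eq_norm_sq]

/-- Estimate on the difference `w = v - v̄` between the nonlinear and linearized solutions,
where `w` solves `w' + Aw + p(t)Bv = 0`, `w(0) = 0`. -/
theorem difference_estimate
    {X : Type*} [NormedAddCommGroup X] [InnerProductSpace ℝ X] [CompleteSpace X]
    [TopologicalSpace.SeparableSpace X]
    (φ : HilbertBasis ℕ ℝ X)
    (lam : ℕ → ℝ) (hlam0 : ∀ k, 0 ≤ lam k) (hmono : Monotone lam)
    (B : X →L[ℝ] X) (CB : ℝ) (hBnorm : ‖B‖ ≤ CB)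
    (T : ℝ) (hT : 0 < T)
    (p : ℝ → ℝ) (hpm : Measurable p)
    (hp2 : IntervalIntegrable (fun s => p s ^ 2) volume 0 T)
    (v : ℝ → X) (hv : ContinuousOn v (Set.Icc 0 T))
    (w : ℝ → X) (hw : ContinuousOn w (Set.Icc 0 T))
    (heq : ∀ (k : ℕ), ∀ t ∈ Set.Icc (0:ℝ) T,
      ⟪w t, φ k⟫ =
        -∫ s in (0:ℝ)..t, Real.exp (-lam k * (t - s)) * p s * ⟪B (v s), φ k⟫) :
    ∀ t ∈ Set.Icc (0:ℝ) T,
      ‖w t‖ ^ 2 ≤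
        CB ^ 2 * Real.exp T * (∫ s in (0:ℝ)..T, p s ^ 2) *
          ⨆ s ∈ Set.Icc (0:ℝ) T, ‖v s‖ ^ 2 := by
  intro t ht
  obtain ⟨ht0, htT⟩ := ht
  have hCB0 : (0:ℝ) ≤ CB := le_trans (norm_nonneg B) hBnorm
  -- the sup M
  set M : ℝ := ⨆ s ∈ Set.Icc (0:ℝ) T, ‖v s‖ ^ 2 with hMdef
  -- bound on the sup
  obtain ⟨C, hC⟩ : BddAbove ((fun s => ‖v s‖ ^ 2) '' Set.Icc (0:ℝ) T) :=
    (isCompact_Icc.image_of_continuousOn ((hv.norm).pow 2)).bddAbove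
  rw [mem_upperBounds] at hC
  have hbdd : BddAbove (Set.range fun s => ⨆ _ : s ∈ Set.Icc (0:ℝ) T, ‖v s‖ ^ 2) := by
    refine ⟨max C 0, ?_⟩
    rintro x ⟨s, rfl⟩
    by_cases hs : s ∈ Set.Icc (0:ℝ) T
    · simp only [ciSup_pos hs]
      exact le_max_of_le_left (hC _ ⟨s, hs, rfl⟩)
    · simp only [hs, Real.iSup_of_isEmpty]
      exact le_max_right _ _
  have hM : ∀ s ∈ Set.Icc (0:ℝ) T, ‖v s‖ ^ 2 ≤ M := by
    intro s hs
    have := le_ciSup hbdd s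
    rwa [ciSup_pos hs] at this
  have hM0 : (0:ℝ) ≤ M :=
    le_trans (sq_nonneg _) (hM 0 ⟨le_refl 0, hT.le⟩)
  -- integrability of p^2
  have hp2T : IntegrableOn (fun s => p s ^ 2) (Set.Ioc 0 T) volume :=
    (intervalIntegrable_iff_integrableOn_Ioc_of_le hT.le).mp hp2
  have hp2t : IntegrableOn (fun s => p s ^ 2) (Set.Ioc 0 t) volume :=
    hp2T.mono_set (Set.Ioc_subset_Ioc_right htT)
  set P : ℝ := ∫ s in Set.Ioc (0:ℝ) T, p s ^ 2 with hPdef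
  have hP0 : 0 ≤ P := setIntegral_nonneg measurableSet_Ioc fun s _ => sq_nonneg _
  have hPt : (∫ s in Set.Ioc (0:ℝ) t, p s ^ 2) ≤ P := by
    refine setIntegral_mono_set hp2T ?_ (HasSubset.Subset.eventuallyLE (Set.Ioc_subset_Ioc_right htT))
    exact Filter.Eventually.of_forall fun s => sq_nonneg _
  -- continuity facts
  have hsubT : Set.Icc (0:ℝ) t ⊆ Set.Icc (0:ℝ) T := Set.Icc_subset_Icc_right htT
  have hBv : ContinuousOn (fun s => B (v s)) (Set.Icc (0:ℝ) T) :=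
    B.continuous.comp_continuousOn hv
  have hgc : ∀ k : ℕ, ContinuousOn (fun s => ⟪B (v s), φ k⟫) (Set.Icc (0:ℝ) T) := by
    intro k
    exact (Continuous.inner continuous_id continuous_const).comp_continuousOn hBv
  have hg2 : ∀ k : ℕ, IntegrableOn (fun s => ⟪B (v s), φ k⟫ ^ 2) (Set.Ioc 0 t) volume := by
    intro k
    exact (((hgc k).pow 2).mono hsubT).integrableOn_Icc.mono_set Set.Ioc_subset_Icc_self
  have hBv2int : IntegrableOn (fun s => ‖B (v s)‖ ^ 2) (Set.Ioc 0 t) volume :=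
    ((hBv.norm.pow 2).mono hsubT).integrableOn_Icc.mono_set Set.Ioc_subset_Icc_self
  -- the per-coefficient estimate
  have hk : ∀ k : ℕ,
      ⟪w t, φ k⟫ ^ 2 ≤ P * ∫ s in Set.Ioc (0:ℝ) t, ⟪B (v s), φ k⟫ ^ 2 := by
    intro k
    set f : ℝ → ℝ := fun s => Real.exp (-lam k * (t - s)) * p s with hfdef
    set g : ℝ → ℝ := fun s => ⟪B (v s), φ k⟫ with hgdef
    have hfm : Measurable f :=
      (Real.continuous_exp.measurable.comp
        ((measurable_const.sub measurable_id).const_mul _)).mul hpm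
    have hexple : ∀ s ∈ Set.Ioc (0:ℝ) t, Real.exp (-lam k * (t - s)) ≤ 1 := by
      intro s hs
      rw [Real.exp_le_one_iff]
      have := hlam0 k
      nlinarith [hs.2]
    have hfsq_le : ∀ s ∈ Set.Ioc (0:ℝ) t, f s ^ 2 ≤ p s ^ 2 := by
      intro s hs
      have h1 := hexple s hs
      have h2 := Real.exp_pos (-lam k * (t - s))
      simp only [hfdef]
      nlinarith [sq_nonneg (p s), mul_le_mul h1 h1 h2.le zero_le_one,
        mul_nonneg h2.le h2.le]
    have hf2 : IntegrableOn (fun s => f s ^ 2) (Set.Ioc 0 t) volume := by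
      refine Integrable.mono' hp2t ((hfm.pow_const 2).aestronglyMeasurable) ?_
      refine (ae_restrict_iff' measurableSet_Ioc).mpr (Filter.Eventually.of_forall ?_)
      intro s hs
      rw [Real.norm_of_nonneg (sq_nonneg _)]
      exact hfsq_le s hs
    have hgm : AEStronglyMeasurable g (volume.restrict (Set.Ioc 0 t)) := by
      refine ContinuousOn.aestronglyMeasurable ?_ measurableSet_Ioc
      exact ((hgc k).mono hsubT).mono Set.Ioc_subset_Icc_self
    have hfg : IntegrableOn (fun s => f s * g s) (Set.Ioc 0 t) volume := by
      refine Integrable.mono' (((hp2t.add (hg2 k))).div_const 2)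
        (hfm.aestronglyMeasurable.mul hgm) ?_
      refine (ae_restrict_iff' measurableSet_Ioc).mpr (Filter.Eventually.of_forall ?_)
      intro s hs
      have h1 := hexple s hs
      have h2 := (Real.exp_pos (-lam k * (t - s))).le
      have habs : |f s| ≤ |p s| := by
        simp only [hfdef, abs_mul, abs_of_nonneg h2]
        nlinarith [abs_nonneg (p s), mul_le_mul_of_nonneg_right h1 (abs_nonneg (p s))]
      calc ‖f s * g s‖ = |f s| * |g s| := by rw [norm_mul]; rfl
        _ ≤ |p s| * |g s| := mul_le_mul_of_nonneg_right habs (abs_nonneg _)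
        _ ≤ (p s ^ 2 + g s ^ 2) / 2 := by nlinarith [sq_nonneg (|p s| - |g s|), sq_abs (p s), sq_abs (g s)]
    have hCS := cs_integral hf2 (hg2 k) hfg
    have hinner : ⟪w t, φ k⟫ ^ 2 = (∫ s in Set.Ioc (0:ℝ) t, f s * g s) ^ 2 := by
      rw [heq k t ⟨ht0, htT⟩, neg_sq, intervalIntegral.integral_of_le ht0]
    have hf2le : (∫ s in Set.Ioc (0:ℝ) t, f s ^ 2) ≤ ∫ s in Set.Ioc (0:ℝ) t, p s ^ 2 :=
      setIntegral_mono_on hf2 hp2t measurableSet_Ioc hfsq_le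
    have hg2nn : 0 ≤ ∫ s in Set.Ioc (0:ℝ) t, g s ^ 2 :=
      setIntegral_nonneg measurableSet_Ioc fun s _ => sq_nonneg _
    have hf2nn : 0 ≤ ∫ s in Set.Ioc (0:ℝ) t, f s ^ 2 :=
      setIntegral_nonneg measurableSet_Ioc fun s _ => sq_nonneg _
    calc ⟪w t, φ k⟫ ^ 2 = (∫ s in Set.Ioc (0:ℝ) t, f s * g s) ^ 2 := hinner
      _ ≤ (∫ s in Set.Ioc (0:ℝ) t, f s ^ 2) * (∫ s in Set.Ioc (0:ℝ) t, g s ^ 2) := hCS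
      _ ≤ (∫ s in Set.Ioc (0:ℝ) t, p s ^ 2) * (∫ s in Set.Ioc (0:ℝ) t, g s ^ 2) :=
          mul_le_mul_of_nonneg_right hf2le hg2nn
      _ ≤ P * ∫ s in Set.Ioc (0:ℝ) t, g s ^ 2 := mul_le_mul_of_nonneg_right hPt hg2nn
  -- summing over k
  have hBint_nn : 0 ≤ ∫ s in Set.Ioc (0:ℝ) t, ‖B (v s)‖ ^ 2 :=
    setIntegral_nonneg measurableSet_Ioc fun s _ => sq_nonneg _
  have hsum : ‖w t‖ ^ 2 ≤ P * ∫ s in Set.Ioc (0:ℝ) t, ‖B (v s)‖ ^ 2 := by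
    rw [← parseval_sq_s7 φ (w t)]
    refine Summable.tsum_le_of_sum_le (summable_inner_sq φ (w t)) fun F => ?_
    calc ∑ k ∈ F, ⟪w t, φ k⟫ ^ 2
        ≤ ∑ k ∈ F, P * ∫ s in Set.Ioc (0:ℝ) t, ⟪B (v s), φ k⟫ ^ 2 :=
          Finset.sum_le_sum fun k _ => hk k
      _ = P * ∑ k ∈ F, ∫ s in Set.Ioc (0:ℝ) t, ⟪B (v s), φ k⟫ ^ 2 := by
          rw [Finset.mul_sum]
      _ = P * ∫ s in Set.Ioc (0:ℝ) t, ∑ k ∈ F, ⟪B (v s), φ k⟫ ^ 2 := by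
          rw [integral_finset_sum F fun k _ => hg2 k]
      _ ≤ P * ∫ s in Set.Ioc (0:ℝ) t, ‖B (v s)‖ ^ 2 := by
          refine mul_le_mul_of_nonneg_left ?_ hP0
          refine setIntegral_mono_on (integrable_finset_sum F fun k _ => hg2 k)
            hBv2int measurableSet_Ioc ?_
          intro s _
          rw [← parseval_sq_s7 φ (B (v s))]
          exact Summable.sum_le_tsum F (fun k _ => sq_nonneg _) (summable_inner_sq φ (B (v s)))
  -- bounding the integral of ‖Bv‖²
  have hBvle : ∀ s ∈ Set.Ioc (0:ℝ) t, ‖B (v s)‖ ^ 2 ≤ CB ^ 2 * M := by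
    intro s hs
    have hsIcc : s ∈ Set.Icc (0:ℝ) T := ⟨hs.1.le, hs.2.trans htT⟩
    have h1 : ‖B (v s)‖ ≤ CB * ‖v s‖ := by
      calc ‖B (v s)‖ ≤ ‖B‖ * ‖v s‖ := B.le_opNorm _
        _ ≤ CB * ‖v s‖ := mul_le_mul_of_nonneg_right hBnorm (norm_nonneg _)
    have h2 := hM s hsIcc
    nlinarith [norm_nonneg (B (v s)), norm_nonneg (v s), mul_nonneg hCB0 (norm_nonneg (v s))]
  have hint2 : (∫ s in Set.Ioc (0:ℝ) t, ‖B (v s)‖ ^ 2) ≤ T * (CB ^ 2 * M) := by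
    have hconst : (∫ s in Set.Ioc (0:ℝ) t, ‖B (v s)‖ ^ 2)
        ≤ ∫ _ in Set.Ioc (0:ℝ) t, CB ^ 2 * M := by
      refine setIntegral_mono_on hBv2int ((integrableOn_const_iff (C := CB ^ 2 * M)).mpr ?_) measurableSet_Ioc hBvle
      right
      rw [Real.volume_Ioc]
      exact ENNReal.ofReal_lt_top
    have hconst2 : (∫ _ in Set.Ioc (0:ℝ) t, CB ^ 2 * M) = t * (CB ^ 2 * M) := by
      rw [setIntegral_const, Real.volume_real_Ioc_of_le ht0, smul_eq_mul,
        sub_zero]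
    rw [hconst2] at hconst
    refine hconst.trans ?_
    exact mul_le_mul_of_nonneg_right htT (mul_nonneg (sq_nonneg _) hM0)
  -- conclusion
  rw [intervalIntegral.integral_of_le hT.le, ← hPdef]
  have hTexp : T ≤ Real.exp T := by
    have := Real.add_one_le_exp T
    linarith
  have hfin : P * (T * (CB ^ 2 * M)) ≤ CB ^ 2 * Real.exp T * P * M := by
    have hprod : 0 ≤ P * CB ^ 2 * M * (Real.exp T - T) :=
      mul_nonneg (mul_nonneg (mul_nonneg hP0 (sq_nonneg _)) hM0) (by linarith)
    nlinarith [hprod]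
  calc ‖w t‖ ^ 2 ≤ P * ∫ s in Set.Ioc (0:ℝ) t, ‖B (v s)‖ ^ 2 := hsum
    _ ≤ P * (T * (CB ^ 2 * M)) := mul_le_mul_of_nonneg_left hint2 hP0
    _ ≤ CB ^ 2 * Real.exp T * P * M := hfin
end

section
/- For every integer k ≥ 1, | ∫₀¹ 2 x² sin(πx) sin(kπx) dx | ≥ ((2π² − 3)/(6π²)) · k^{−3}. -/
open Real intervalIntegral

lemma cos_nat_pi (n : ℕ) : Real.cos (n * Real.pi) = (-1)^n := by
  have := Real.cos_nat_mul_pi_sub 0 n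
  simpa using this

lemma int_x2_cos (c : ℝ) (hc : c ≠ 0) :
    ∫ x in (0:ℝ)..1, x^2 * Real.cos (c*x)
      = Real.sin c / c + 2*Real.cos c/c^2 - 2*Real.sin c/c^3 := by
  have key : ∀ x ∈ Set.uIcc (0:ℝ) 1,
      HasDerivAt (fun x : ℝ => x^2 * Real.sin (c*x)/c + 2*x*Real.cos (c*x)/c^2
        - 2*Real.sin (c*x)/c^3) (x^2 * Real.cos (c*x)) x := by
    intro x _
    have h1 : HasDerivAt (fun x : ℝ => c*x) c x := by
      simpa using (hasDerivAt_id x).const_mul c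
    have hs : HasDerivAt (fun x : ℝ => Real.sin (c*x)) (Real.cos (c*x) * c) x :=
      (Real.hasDerivAt_sin (c*x)).comp x h1
    have hcx : HasDerivAt (fun x : ℝ => Real.cos (c*x)) (-Real.sin (c*x) * c) x :=
      (Real.hasDerivAt_cos (c*x)).comp x h1
    have hx2 : HasDerivAt (fun x : ℝ => x^2) (2*x) x := by
      simpa using hasDerivAt_pow 2 x
    have h2x : HasDerivAt (fun x : ℝ => 2*x) 2 x := by
      simpa using (hasDerivAt_id x).const_mul 2
    have := (((hx2.mul hs).div_const c).add ((h2x.mul hcx).div_const (c^2))).sub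
      ((hs.const_mul 2).div_const (c^3))
    refine this.congr_deriv ?_
    field_simp
    ring
  rw [intervalIntegral.integral_eq_sub_of_hasDerivAt key (by
    apply Continuous.intervalIntegrable; fun_prop)]
  simp

lemma int_x2_cos_nat (a : ℕ) (ha : a ≠ 0) :
    ∫ x in (0:ℝ)..1, x^2 * Real.cos ((a:ℝ)*Real.pi*x)
      = 2*(-1)^a/((a:ℝ)^2*Real.pi^2) := by
  have hc : (a:ℝ)*Real.pi ≠ 0 :=
    mul_ne_zero (Nat.cast_ne_zero.mpr ha) Real.pi_ne_zero
  rw [int_x2_cos _ hc, Real.sin_nat_mul_pi, cos_nat_pi]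
  field_simp
  ring

set_option maxHeartbeats 1000000 in
/-- Polynomial lower bound on the Fourier coefficients `⟨x²φ₁, φ_k⟩` with respect to the
Dirichlet eigenfunctions: `|∫₀¹ 2x² sin(πx) sin(kπx) dx| ≥ ((2π²-3)/(6π²)) k⁻³`. -/
theorem fourier_coefficients_x_sq_lower_bound :
    ∀ k : ℕ, 1 ≤ k →
      (2 * Real.pi ^ 2 - 3) / (6 * Real.pi ^ 2) / (k : ℝ) ^ 3 ≤
        |∫ x in (0:ℝ)..1, 2 * x ^ 2 * Real.sin (Real.pi * x) * Real.sin (k * Real.pi * x)| := by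
  intro k hk
  have hπ := Real.pi_pos
  have hπ2 : (0:ℝ) < Real.pi^2 := by positivity
  have hintegrand : ∀ x : ℝ, 2 * x ^ 2 * Real.sin (Real.pi * x) * Real.sin (k * Real.pi * x)
      = x^2 * Real.cos (((k:ℝ)-1)*Real.pi*x) - x^2 * Real.cos (((k:ℝ)+1)*Real.pi*x) := by
    intro x
    have e1 : ((((k:ℝ)-1)*Real.pi*x + ((k:ℝ)+1)*Real.pi*x))/2 = (k:ℝ)*Real.pi*x := by ring
    have e2 : ((((k:ℝ)-1)*Real.pi*x - ((k:ℝ)+1)*Real.pi*x))/2 = -(Real.pi*x) := by ring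
    have := Real.cos_sub_cos (((k:ℝ)-1)*Real.pi*x) (((k:ℝ)+1)*Real.pi*x)
    rw [e1, e2, Real.sin_neg] at this
    linear_combination (-(x^2)) * this
  have hsplit : (∫ x in (0:ℝ)..1, 2 * x ^ 2 * Real.sin (Real.pi * x) * Real.sin (k * Real.pi * x))
      = (∫ x in (0:ℝ)..1, x^2 * Real.cos (((k:ℝ)-1)*Real.pi*x))
        - (∫ x in (0:ℝ)..1, x^2 * Real.cos (((k:ℝ)+1)*Real.pi*x)) := by
    rw [← intervalIntegral.integral_sub (by apply Continuous.intervalIntegrable; fun_prop)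
      (by apply Continuous.intervalIntegrable; fun_prop)]
    exact intervalIntegral.integral_congr (fun x _ => hintegrand x)
  rcases eq_or_lt_of_le hk with h1 | h2
  · -- k = 1
    subst_vars
    have hA : (∫ x in (0:ℝ)..1, x^2 * Real.cos ((((1:ℕ):ℝ)-1)*Real.pi*x)) = 1/3 := by
      have hcong : ∀ x ∈ Set.uIcc (0:ℝ) 1,
          x^2 * Real.cos ((((1:ℕ):ℝ)-1)*Real.pi*x) = x^2 := by
        intro x _; norm_num
      rw [intervalIntegral.integral_congr hcong, integral_pow]; norm_num
    have hB : (∫ x in (0:ℝ)..1, x^2 * Real.cos ((((1:ℕ):ℝ)+1)*Real.pi*x)) = 1/(2*Real.pi^2) := by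
      have e : (((1:ℕ):ℝ)+1) = ((2:ℕ):ℝ) := by norm_num
      rw [e, int_x2_cos_nat 2 (by norm_num)]; norm_num; ring
    rw [hsplit, hA, hB]
    have hval : (1:ℝ)/3 - 1/(2*Real.pi^2) = (2*Real.pi^2-3)/(6*Real.pi^2) := by
      rw [div_sub_div _ _ (by norm_num : (3:ℝ) ≠ 0) (by positivity : (2*Real.pi^2) ≠ 0),
        show (1*(2*Real.pi^2) - 3*1) = 2*Real.pi^2 - 3 by ring,
        show (3*(2*Real.pi^2)) = 6*Real.pi^2 by ring]
    have hpos : (0:ℝ) ≤ (2*Real.pi^2-3)/(6*Real.pi^2) := by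
      have : (3:ℝ) < Real.pi := Real.pi_gt_three
      have h9 : (9:ℝ) < Real.pi^2 := by nlinarith
      exact div_nonneg (by nlinarith) (by positivity)
    rw [hval, abs_of_nonneg hpos]
    norm_num
  · -- k ≥ 2
    have hk2 : 2 ≤ k := h2
    set kr : ℝ := (k:ℝ) with hkr_def
    have hkr : (2:ℝ) ≤ kr := by rw [hkr_def]; exact_mod_cast hk2
    have hkm : (1:ℝ) ≤ kr - 1 := by linarith
    have c1 : ((k - 1 : ℕ):ℝ) = kr - 1 := by
      rw [Nat.cast_sub hk, Nat.cast_one]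
    have c2 : ((k + 1 : ℕ):ℝ) = kr + 1 := by push_cast; ring
    have hI1 : (∫ x in (0:ℝ)..1, x^2 * Real.cos ((kr-1)*Real.pi*x))
        = 2*(-1:ℝ)^(k-1)/((kr-1)^2*Real.pi^2) := by
      rw [← c1]; exact int_x2_cos_nat (k-1) (by omega)
    have hI2 : (∫ x in (0:ℝ)..1, x^2 * Real.cos ((kr+1)*Real.pi*x))
        = 2*(-1:ℝ)^(k+1)/((kr+1)^2*Real.pi^2) := by
      rw [← c2]; exact int_x2_cos_nat (k+1) (by omega)
    have hpow : ((-1:ℝ))^(k-1) = (-1:ℝ)^(k+1) := by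
      have hkk : k + 1 = (k - 1) + 2 := by omega
      rw [hkk, pow_add]; norm_num
    set A : ℝ := 2/((kr-1)^2*Real.pi^2) - 2/((kr+1)^2*Real.pi^2) with hA_def
    have hV : (∫ x in (0:ℝ)..1, 2 * x ^ 2 * Real.sin (Real.pi * x) * Real.sin (k * Real.pi * x))
        = (-1:ℝ)^(k+1) * A := by
      rw [hsplit, hI1, hI2, hpow, hA_def]; ring
    have hA0 : (0:ℝ) ≤ A := by
      rw [hA_def]
      have h1 : (0:ℝ) < (kr-1)^2*Real.pi^2 := by positivity
      have h2 : (0:ℝ) < (kr+1)^2*Real.pi^2 := by positivity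
      rw [sub_nonneg, div_le_div_iff₀ h2 h1]
      nlinarith
    rw [hV, abs_mul, abs_pow, abs_neg, abs_one, one_pow, one_mul, abs_of_nonneg hA0]
    have hAeq : A = 8*kr/(((kr-1)*(kr+1))^2*Real.pi^2) := by
      rw [hA_def]
      have h1 : ((kr-1):ℝ) ≠ 0 := by linarith
      have h2 : ((kr+1):ℝ) ≠ 0 := by linarith
      field_simp
      ring
    rw [hAeq]
    have hπ10 : Real.pi^2 < 10 := by nlinarith [Real.pi_lt_d2, Real.pi_pos]
    have h17 : 2*Real.pi^2 - 3 ≤ 17 := by linarith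
    have h0' : (0:ℝ) ≤ 2*Real.pi^2 - 3 := by nlinarith [Real.pi_gt_three, Real.pi_pos]
    have hk2' : (4:ℝ) ≤ kr^2 := by nlinarith [hkr]
    have hPQ : ((kr-1)*(kr+1))^2 ≤ kr^4 := by nlinarith [hk2']
    have hq : (2*Real.pi^2-3)*((kr-1)*(kr+1))^2 ≤ 48*kr^4 := by
      have hkr4 : (0:ℝ) ≤ kr^4 := by positivity
      calc (2*Real.pi^2-3)*((kr-1)*(kr+1))^2 ≤ 17*((kr-1)*(kr+1))^2 :=
            mul_le_mul_of_nonneg_right h17 (sq_nonneg _)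
        _ ≤ 17*kr^4 := by linarith [mul_le_mul_of_nonneg_left hPQ (by norm_num : (0:ℝ) ≤ 17)]
        _ ≤ 48*kr^4 := by linarith
    rw [div_div, div_le_div_iff₀ (by positivity) (by positivity)]
    have hfin := mul_le_mul_of_nonneg_right hq hπ2.le
    calc (2*Real.pi^2-3) * (((kr-1)*(kr+1))^2*Real.pi^2)
        = (2*Real.pi^2-3)*((kr-1)*(kr+1))^2 * Real.pi^2 := by ring
      _ ≤ 48*kr^4 * Real.pi^2 := hfin
      _ = 8*kr*(6*Real.pi^2*kr^3) := by ring
end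

section
/- Let μ : [0,1] → ℝ be three times continuously differentiable with μ'(1) + μ'(0) ≠ 0 and μ'(1) − μ'(0) ≠ 0, and set c_k := ∫₀¹ 2 μ(x) sin(πx) sin(kπx) dx for k ≥ 1. If c_k ≠ 0 for every k ≥ 1, then there exists a constant C > 0 such that |c_k| ≥ C k^{−3} for every k ≥ 1. -/
open MeasureTheory Set Filter Real intervalIntegral Complex
open scoped FourierTransform
set_option maxHeartbeats 1000000 in

lemma myRL (g : ℝ → ℝ) (hg : ContinuousOn g (Icc 0 1)) :
    Tendsto (fun n : ℕ => ∫ x in (0:ℝ)..1, g x * Real.sin (n * π * x)) atTop (nhds 0) := by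
  set f : ℝ → ℂ := (Icc (0:ℝ) 1).indicator (fun x => (g x : ℂ)) with hf
  have hRL := Real.tendsto_integral_exp_smul_cocompact f
  have hcast : Tendsto (fun n : ℕ => (n:ℝ)/2) atTop (cocompact ℝ) := by
    rw [cocompact_eq_atBot_atTop]
    exact (tendsto_natCast_atTop_atTop.atTop_div_const (by norm_num)).mono_right le_sup_right
  have h0 := hRL.comp hcast
  have h1 : Tendsto (fun n : ℕ => -((∫ v : ℝ, 𝐞 (-(v * ((n:ℝ)/2))) • f v).im)) atTop (nhds 0) := by
    have h2 : Tendsto (fun n : ℕ => (∫ v : ℝ, 𝐞 (-(v * ((n:ℝ)/2))) • f v)) atTop (nhds 0) := h0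
    have h3 := ((Complex.continuous_im.tendsto 0).comp h2).neg
    simp only [Function.comp_def, Complex.zero_im, neg_zero] at h3
    exact h3
  refine h1.congr fun n => ?_
  have hmeas : MeasurableSet (Icc (0:ℝ) 1) := measurableSet_Icc
  have hind : (fun v : ℝ => 𝐞 (-(v * ((n:ℝ)/2))) • f v)
      = (Icc (0:ℝ) 1).indicator (fun x => 𝐞 (-(x * ((n:ℝ)/2))) • (g x : ℂ)) := by
    funext v
    rw [hf]
    by_cases hv : v ∈ Icc (0:ℝ) 1 <;> simp [Set.indicator_apply, hv]
  have hcont : ContinuousOn (fun x : ℝ => 𝐞 (-(x * ((n:ℝ)/2))) • (g x : ℂ)) (Icc 0 1) := by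
    apply ContinuousOn.smul
    · exact (continuous_subtype_val.comp (Real.continuous_fourierChar.comp ((continuous_id.mul continuous_const).neg))).continuousOn
    · exact Complex.continuous_ofReal.comp_continuousOn hg
  have hint : IntegrableOn (fun x : ℝ => 𝐞 (-(x * ((n:ℝ)/2))) • (g x : ℂ)) (Icc 0 1) :=
    hcont.integrableOn_compact isCompact_Icc
  rw [hind, MeasureTheory.integral_indicator hmeas]
  have him2 := (integral_im hint).symm
  simp only [RCLike.im_to_complex] at him2
  rw [him2]
  have him : ∀ x : ℝ, (𝐞 (-(x * ((n:ℝ)/2))) • (g x : ℂ)).im = -(g x * Real.sin (n * π * x)) := by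
    intro x
    rw [Circle.smul_def, Real.fourierChar_apply]
    rw [smul_eq_mul, Complex.mul_im]
    simp [Complex.exp_ofReal_mul_I_im, Complex.exp_ofReal_mul_I_re]
    rw [show (-(2 * (π:ℂ) * ((x:ℂ) * ((n:ℂ)/2)) * I)) = ((-((n:ℝ) * π * x) : ℝ) : ℂ) * I by push_cast; ring,
      Complex.exp_ofReal_mul_I_im, Real.sin_neg]
    ring
  simp_rw [him]
  rw [MeasureTheory.integral_neg, neg_neg, intervalIntegral.integral_of_le (by norm_num : (0:ℝ) ≤ 1),
    ← integral_Icc_eq_integral_Ioc]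
open MeasureTheory Set Filter Real intervalIntegral

lemma myIBPcos (f f' : ℝ → ℝ)
    (hf : ∀ x ∈ Icc (0:ℝ) 1, HasDerivWithinAt f (f' x) (Icc 0 1) x)
    (hf' : ContinuousOn f' (Icc 0 1)) (n : ℕ) (hn : 1 ≤ n) :
    ∫ x in (0:ℝ)..1, f x * Real.cos (n * π * x)
      = -(1/((n:ℝ)*π)) * ∫ x in (0:ℝ)..1, f' x * Real.sin (n * π * x) := by
  have huIcc : uIcc (0:ℝ) 1 = Icc 0 1 := uIcc_of_le (by norm_num)
  have hn0 : (0:ℝ) < (n:ℝ) := by exact_mod_cast hn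
  have hπ : ((n:ℝ)*π) ≠ 0 := by have := Real.pi_pos; positivity
  have hv : ∀ x ∈ uIcc (0:ℝ) 1,
      HasDerivWithinAt (fun y => Real.sin ((n:ℝ)*π*y) / ((n:ℝ)*π)) (Real.cos ((n:ℝ)*π*x))
        (uIcc 0 1) x := by
    intro x _
    have h1 : HasDerivAt (fun y : ℝ => (n:ℝ)*π*y) ((n:ℝ)*π) x := by
      simpa using (hasDerivAt_id x).const_mul ((n:ℝ)*π)
    have h2 := ((Real.hasDerivAt_sin ((n:ℝ)*π*x)).comp x h1).div_const ((n:ℝ)*π)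
    have h3 : Real.cos ((n:ℝ)*π*x) * ((n:ℝ)*π) / ((n:ℝ)*π) = Real.cos ((n:ℝ)*π*x) := by
      field_simp
    rw [h3] at h2
    exact h2.hasDerivWithinAt
  have hfc : ContinuousOn f (Icc 0 1) := fun x hx => (hf x hx).continuousWithinAt
  have hfint : IntervalIntegrable f' volume 0 1 := (huIcc ▸ hf').intervalIntegrable
  have hvint : IntervalIntegrable (fun x => Real.cos ((n:ℝ)*π*x)) volume 0 1 :=
    (Continuous.intervalIntegrable (by fun_prop) 0 1)
  have key := integral_mul_deriv_eq_deriv_mul_of_hasDerivWithinAt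
    (u := f) (v := fun y => Real.sin ((n:ℝ)*π*y) / ((n:ℝ)*π)) (u' := f')
    (v' := fun x => Real.cos ((n:ℝ)*π*x))
    (fun x hx => huIcc ▸ hf x (huIcc ▸ hx)) hv hfint hvint
  rw [key]
  beta_reduce
  have h1 : Real.sin ((n:ℝ)*π*1) = 0 := by
    rw [mul_one]; exact Real.sin_nat_mul_pi n
  have h0 : Real.sin ((n:ℝ)*π*0) = 0 := by simp
  rw [h1, h0]
  simp only [zero_div, mul_zero, zero_sub, sub_zero, zero_mul]
  rw [show (fun x => f' x * (Real.sin ((n:ℝ)*π*x) / ((n:ℝ)*π)))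
      = fun x => (f' x * Real.sin ((n:ℝ)*π*x)) / ((n:ℝ)*π) by funext x; ring]
  rw [intervalIntegral.integral_div]
  ring

lemma myIBPsin (f f' : ℝ → ℝ)
    (hf : ∀ x ∈ Icc (0:ℝ) 1, HasDerivWithinAt f (f' x) (Icc 0 1) x)
    (hf' : ContinuousOn f' (Icc 0 1)) (n : ℕ) (hn : 1 ≤ n) :
    ∫ x in (0:ℝ)..1, f x * Real.sin (n * π * x)
      = (f 0 - (-1)^n * f 1)/((n:ℝ)*π)
        + (1/((n:ℝ)*π)) * ∫ x in (0:ℝ)..1, f' x * Real.cos (n * π * x) := by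
  have huIcc : uIcc (0:ℝ) 1 = Icc 0 1 := uIcc_of_le (by norm_num)
  have hn0 : (0:ℝ) < (n:ℝ) := by exact_mod_cast hn
  have hπ : ((n:ℝ)*π) ≠ 0 := by have := Real.pi_pos; positivity
  have hv : ∀ x ∈ uIcc (0:ℝ) 1,
      HasDerivWithinAt (fun y => -(Real.cos ((n:ℝ)*π*y) / ((n:ℝ)*π))) (Real.sin ((n:ℝ)*π*x))
        (uIcc 0 1) x := by
    intro x _
    have h1 : HasDerivAt (fun y : ℝ => (n:ℝ)*π*y) ((n:ℝ)*π) x := by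
      simpa using (hasDerivAt_id x).const_mul ((n:ℝ)*π)
    have h2 := (((Real.hasDerivAt_cos ((n:ℝ)*π*x)).comp x h1).div_const ((n:ℝ)*π)).neg
    have h3 : -(-Real.sin ((n:ℝ)*π*x) * ((n:ℝ)*π) / ((n:ℝ)*π)) = Real.sin ((n:ℝ)*π*x) := by
      field_simp
    rw [h3] at h2
    exact h2.hasDerivWithinAt
  have hfint : IntervalIntegrable f' volume 0 1 := (huIcc ▸ hf').intervalIntegrable
  have hvint : IntervalIntegrable (fun x => Real.sin ((n:ℝ)*π*x)) volume 0 1 :=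
    (Continuous.intervalIntegrable (by fun_prop) 0 1)
  have key := integral_mul_deriv_eq_deriv_mul_of_hasDerivWithinAt
    (u := f) (v := fun y => -(Real.cos ((n:ℝ)*π*y) / ((n:ℝ)*π))) (u' := f')
    (v' := fun x => Real.sin ((n:ℝ)*π*x))
    (fun x hx => huIcc ▸ hf x (huIcc ▸ hx)) hv hfint hvint
  rw [key]
  beta_reduce
  have h1 : Real.cos ((n:ℝ)*π*1) = (-1)^n := by
    rw [mul_one]
    simpa using Real.cos_nat_mul_pi_sub 0 n
  have h0 : Real.cos ((n:ℝ)*π*0) = 1 := by simp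
  rw [h1, h0]
  rw [show (fun x => f' x * -(Real.cos ((n:ℝ)*π*x) / ((n:ℝ)*π)))
      = fun x => -((f' x * Real.cos ((n:ℝ)*π*x)) / ((n:ℝ)*π)) by funext x; ring]
  rw [intervalIntegral.integral_neg, intervalIntegral.integral_div]
  field_simp
  ring


set_option maxHeartbeats 2000000 in
/-- Lower bound on the Fourier coefficients `c_k = ∫₀¹ 2μ(x) sin(πx) sin(kπx) dx` for a
`C³` potential `μ` with `μ'(1) ± μ'(0) ≠ 0` and `c_k ≠ 0` for all `k`: there is `C > 0`
with `|c_k| ≥ C k⁻³`. -/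
theorem fourier_coefficients_dirichlet_lower_bound
    (μ μ' μ'' μ''' : ℝ → ℝ)
    (hμ : ∀ x ∈ Set.Icc (0:ℝ) 1, HasDerivWithinAt μ (μ' x) (Set.Icc 0 1) x)
    (hμ' : ∀ x ∈ Set.Icc (0:ℝ) 1, HasDerivWithinAt μ' (μ'' x) (Set.Icc 0 1) x)
    (hμ'' : ∀ x ∈ Set.Icc (0:ℝ) 1, HasDerivWithinAt μ'' (μ''' x) (Set.Icc 0 1) x)
    (hμ''' : ContinuousOn μ''' (Set.Icc 0 1))
    (hsum : μ' 1 + μ' 0 ≠ 0) (hdiff : μ' 1 - μ' 0 ≠ 0)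
    (c : ℕ → ℝ)
    (hc : ∀ k : ℕ, 1 ≤ k →
      c k = ∫ x in (0:ℝ)..1, 2 * μ x * Real.sin (Real.pi * x) * Real.sin (k * Real.pi * x))
    (hne : ∀ k : ℕ, 1 ≤ k → c k ≠ 0) :
    ∃ C > (0:ℝ), ∀ k : ℕ, 1 ≤ k → C / (k : ℝ) ^ 3 ≤ |c k| := by
  have hπ : (0:ℝ) < π := Real.pi_pos
  have huIcc : uIcc (0:ℝ) 1 = Icc 0 1 := uIcc_of_le (by norm_num)
  have hμc : ContinuousOn μ (Icc 0 1) := fun x hx => (hμ x hx).continuousWithinAt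
  have hμ'c : ContinuousOn μ' (Icc 0 1) := fun x hx => (hμ' x hx).continuousWithinAt
  have hμ''c : ContinuousOn μ'' (Icc 0 1) := fun x hx => (hμ'' x hx).continuousWithinAt
  set e : ℕ → ℝ := fun n => ∫ x in (0:ℝ)..1, μ''' x * Real.sin ((n:ℝ) * π * x) with hedef
  set I : ℕ → ℝ := fun n => ∫ x in (0:ℝ)..1, μ x * Real.cos ((n:ℝ) * π * x) with hIdef
  have he : Filter.Tendsto e Filter.atTop (nhds 0) := myRL μ''' hμ'''
  -- expansion of I n
  have hI : ∀ n : ℕ, 1 ≤ n →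
      I n = ((-1)^n * μ' 1 - μ' 0)/((n:ℝ)*π)^2 + (1/((n:ℝ)*π))^3 * e n := by
    intro n hn
    have hnπ : ((n:ℝ)*π) ≠ 0 := by
      have : (0:ℝ) < (n:ℝ) := by exact_mod_cast hn
      positivity
    rw [hIdef]
    simp only
    rw [myIBPcos μ μ' hμ hμ'c n hn, myIBPsin μ' μ'' hμ' hμ''c n hn,
      myIBPcos μ'' μ''' hμ'' hμ''' n hn]
    rw [hedef]
    field_simp
    ring
  -- interval integrability of μ * cos
  have hIint : ∀ m : ℕ, IntervalIntegrable (fun x => μ x * Real.cos ((m:ℝ)*π*x)) volume 0 1 := by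
    intro m
    apply ContinuousOn.intervalIntegrable
    rw [huIcc]
    exact hμc.mul (Continuous.continuousOn (by fun_prop))
  -- split c k
  have hsplit : ∀ k : ℕ, 2 ≤ k → c k = I (k-1) - I (k+1) := by
    intro k hk
    rw [hc k (by omega)]
    rw [hIdef]
    simp only
    rw [← intervalIntegral.integral_sub (hIint (k-1)) (hIint (k+1))]
    apply intervalIntegral.integral_congr
    intro x _
    simp only
    have h1 : ((k-1:ℕ):ℝ) = (k:ℝ)-1 := by
      rw [Nat.cast_sub (by omega : 1 ≤ k)]; norm_num
    have h2 : ((k+1:ℕ):ℝ) = (k:ℝ)+1 := by push_cast; ring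
    rw [h1, h2]
    rw [show μ x * Real.cos (((k:ℝ)-1)*π*x) - μ x * Real.cos (((k:ℝ)+1)*π*x)
        = μ x * (Real.cos (((k:ℝ)-1)*π*x) - Real.cos (((k:ℝ)+1)*π*x)) by ring]
    rw [Real.cos_sub_cos]
    rw [show ((((k:ℝ)-1)*π*x + ((k:ℝ)+1)*π*x)/2) = (k:ℝ)*π*x by ring,
        show ((((k:ℝ)-1)*π*x - ((k:ℝ)+1)*π*x)/2) = -(π*x) by ring, Real.sin_neg]
    ring
  -- closed form of c k
  have hck : ∀ k : ℕ, 2 ≤ k →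
      c k = ((-1)^(k-1) * μ' 1 - μ' 0) * (1/(((k:ℝ)-1)*π)^2 - 1/(((k:ℝ)+1)*π)^2)
        + ((1/(((k:ℝ)-1)*π))^3 * e (k-1) - (1/(((k:ℝ)+1)*π))^3 * e (k+1)) := by
    intro k hk
    have h1 : ((k-1:ℕ):ℝ) = (k:ℝ)-1 := by
      rw [Nat.cast_sub (by omega : 1 ≤ k)]; norm_num
    have h2 : ((k+1:ℕ):ℝ) = (k:ℝ)+1 := by push_cast; ring
    have hsign : ((-1:ℝ))^(k+1) = (-1)^(k-1) := by
      rw [show k+1 = (k-1)+2 by omega, pow_add]; norm_num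
    rw [hsplit k hk, hI (k-1) (by omega), hI (k+1) (by omega), h1, h2, hsign]
    ring
  -- lower bound constants
  set d : ℝ := min |μ' 1 + μ' 0| |μ' 1 - μ' 0| with hddef
  have hd : 0 < d := lt_min (abs_pos.2 hsum) (abs_pos.2 hdiff)
  have hs : ∀ k : ℕ, d ≤ |(-1:ℝ)^(k-1) * μ' 1 - μ' 0| := by
    intro k
    rcases Nat.even_or_odd (k-1) with hpar | hpar
    · rw [hpar.neg_one_pow, one_mul]
      exact min_le_right _ _
    · rw [hpar.neg_one_pow]
      rw [show (-1:ℝ) * μ' 1 - μ' 0 = -(μ' 1 + μ' 0) by ring, abs_neg]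
      exact min_le_left _ _
  -- tail estimate
  obtain ⟨N, hN⟩ := (Metric.tendsto_atTop.1 he) (d*π/8) (by positivity)
  simp only [Real.dist_eq, sub_zero] at hN
  set K : ℕ := N + 2 with hKdef
  have htail : ∀ k : ℕ, K ≤ k → 2*d/π^2 / (k:ℝ)^3 ≤ |c k| := by
    intro k hk
    have hk2 : 2 ≤ k := by omega
    have hkR : (2:ℝ) ≤ (k:ℝ) := by exact_mod_cast hk2
    have hkpos : (0:ℝ) < (k:ℝ) := by linarith
    have hk1 : (0:ℝ) < (k:ℝ) - 1 := by linarith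
    -- main term lower bound
    have hmain : 4/(π^2 * (k:ℝ)^3) ≤ 1/(((k:ℝ)-1)*π)^2 - 1/(((k:ℝ)+1)*π)^2 := by
      rw [div_sub_div _ _ (by positivity) (by positivity), div_le_div_iff₀ (by positivity) (by positivity)]
      have key : (((k:ℝ)-1))^2*(((k:ℝ)+1))^2 ≤ (k:ℝ)^4 := by nlinarith
      calc 4 * ((((k:ℝ) - 1) * π) ^ 2 * (((k:ℝ) + 1) * π) ^ 2)
          = 4*π^4*((((k:ℝ)-1))^2*(((k:ℝ)+1))^2) := by ring
        _ ≤ 4*π^4*(k:ℝ)^4 := by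
            exact mul_le_mul_of_nonneg_left key (by positivity)
        _ = (1 * (((k:ℝ) + 1) * π) ^ 2 - (((k:ℝ) - 1) * π) ^ 2 * 1) * (π ^ 2 * (k:ℝ) ^ 3) := by ring
    -- error bound
    have hcube : (1/(((k:ℝ)-1)*π))^3 ≤ 8/(π^3 * (k:ℝ)^3) := by
      rw [div_pow, one_pow, div_le_div_iff₀ (by positivity) (by positivity)]
      have hq : (0:ℝ) ≤ 7*(k:ℝ)^2 - 10*(k:ℝ) + 4 := by nlinarith [sq_nonneg ((k:ℝ)-1)]
      have h8 : (k:ℝ)^3 ≤ 8 * ((k:ℝ)-1)^3 := by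
        nlinarith [mul_nonneg (by linarith : (0:ℝ) ≤ (k:ℝ) - 2) hq]
      have := mul_le_mul_of_nonneg_left h8 (le_of_lt (pow_pos hπ 3))
      nlinarith [this]
    have hcube' : (1/(((k:ℝ)+1)*π))^3 ≤ 8/(π^3 * (k:ℝ)^3) := by
      rw [div_pow, one_pow, div_le_div_iff₀ (by positivity) (by positivity)]
      have h8 : (k:ℝ)^3 ≤ 8*((k:ℝ)+1)^3 := by nlinarith
      have := mul_le_mul_of_nonneg_left h8 (le_of_lt (pow_pos hπ 3))
      nlinarith [this]
    have heN1 : |e (k-1)| < d*π/8 := hN (k-1) (by omega)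
    have heN2 : |e (k+1)| < d*π/8 := hN (k+1) (by omega)
    have herr : |(1/(((k:ℝ)-1)*π))^3 * e (k-1) - (1/(((k:ℝ)+1)*π))^3 * e (k+1)|
        ≤ 8/(π^3 * (k:ℝ)^3) * (|e (k-1)| + |e (k+1)|) := by
      calc |(1/(((k:ℝ)-1)*π))^3 * e (k-1) - (1/(((k:ℝ)+1)*π))^3 * e (k+1)|
          ≤ |(1/(((k:ℝ)-1)*π))^3 * e (k-1)| + |(1/(((k:ℝ)+1)*π))^3 * e (k+1)| := abs_sub _ _
        _ = (1/(((k:ℝ)-1)*π))^3 * |e (k-1)| + (1/(((k:ℝ)+1)*π))^3 * |e (k+1)| := by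
            rw [abs_mul, abs_mul, _root_.abs_of_nonneg (by positivity : (0:ℝ) ≤ (1/(((k:ℝ)-1)*π))^3),
              _root_.abs_of_nonneg (by positivity : (0:ℝ) ≤ (1/(((k:ℝ)+1)*π))^3)]
        _ ≤ 8/(π^3 * (k:ℝ)^3) * |e (k-1)| + 8/(π^3 * (k:ℝ)^3) * |e (k+1)| := by
            gcongr
        _ = 8/(π^3 * (k:ℝ)^3) * (|e (k-1)| + |e (k+1)|) := by ring
    have herr2 : |(1/(((k:ℝ)-1)*π))^3 * e (k-1) - (1/(((k:ℝ)+1)*π))^3 * e (k+1)|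
        ≤ 2*d/(π^2 * (k:ℝ)^3) := by
      refine herr.trans ?_
      have : |e (k-1)| + |e (k+1)| ≤ d*π/4 := by linarith
      calc 8/(π^3 * (k:ℝ)^3) * (|e (k-1)| + |e (k+1)|) ≤ 8/(π^3 * (k:ℝ)^3) * (d*π/4) := by
            gcongr
        _ = 2*d/(π^2 * (k:ℝ)^3) := by field_simp; ring
    have hmabs : d * (4/(π^2 * (k:ℝ)^3))
        ≤ |((-1:ℝ)^(k-1) * μ' 1 - μ' 0) * (1/(((k:ℝ)-1)*π)^2 - 1/(((k:ℝ)+1)*π)^2)| := by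
      rw [abs_mul]
      have h1 := hs k
      have h2 : (0:ℝ) ≤ 1/(((k:ℝ)-1)*π)^2 - 1/(((k:ℝ)+1)*π)^2 := le_trans (by positivity) hmain
      rw [_root_.abs_of_nonneg h2]
      exact mul_le_mul h1 hmain (by positivity) (abs_nonneg _)
    have habs : |c k| ≥ d * (4/(π^2 * (k:ℝ)^3)) - 2*d/(π^2 * (k:ℝ)^3) := by
      rw [hck k hk2]
      have h3 : |((-1:ℝ)^(k-1) * μ' 1 - μ' 0) * (1/(((k:ℝ)-1)*π)^2 - 1/(((k:ℝ)+1)*π)^2)|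
          - |(1/(((k:ℝ)-1)*π))^3 * e (k-1) - (1/(((k:ℝ)+1)*π))^3 * e (k+1)|
          ≤ |((-1:ℝ)^(k-1) * μ' 1 - μ' 0) * (1/(((k:ℝ)-1)*π)^2 - 1/(((k:ℝ)+1)*π)^2)
            + ((1/(((k:ℝ)-1)*π))^3 * e (k-1) - (1/(((k:ℝ)+1)*π))^3 * e (k+1))| := by
        have h5 := abs_sub
          ((((-1:ℝ)^(k-1) * μ' 1 - μ' 0) * (1/(((k:ℝ)-1)*π)^2 - 1/(((k:ℝ)+1)*π)^2))
            + ((1/(((k:ℝ)-1)*π))^3 * e (k-1) - (1/(((k:ℝ)+1)*π))^3 * e (k+1)))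
          ((1/(((k:ℝ)-1)*π))^3 * e (k-1) - (1/(((k:ℝ)+1)*π))^3 * e (k+1))
        rw [add_sub_cancel_right] at h5
        linarith
      linarith
    have : 2*d/π^2 / (k:ℝ)^3 = d * (4/(π^2 * (k:ℝ)^3)) - 2*d/(π^2 * (k:ℝ)^3) := by
      field_simp; ring
    linarith [habs]
  -- small k
  have hKpos : 1 ≤ K := by omega
  have hmem : (Finset.Icc 1 K).Nonempty := ⟨1, Finset.mem_Icc.2 ⟨le_refl 1, hKpos⟩⟩
  set m : ℝ := (Finset.Icc 1 K).inf' hmem (fun k => |c k| * (k:ℝ)^3) with hmdef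
  have hm : 0 < m := by
    rw [hmdef, Finset.lt_inf'_iff]
    intro b hb
    have hb1 : 1 ≤ b := (Finset.mem_Icc.1 hb).1
    have : (0:ℝ) < |c b| := abs_pos.2 (hne b hb1)
    have hbp : (0:ℝ) < (b:ℝ)^3 := by
      have : (0:ℝ) < (b:ℝ) := by exact_mod_cast hb1
      positivity
    positivity
  refine ⟨min (2*d/π^2) m, lt_min (by positivity) hm, fun k hk => ?_⟩
  have hkp : (0:ℝ) < (k:ℝ)^3 := by
    have : (0:ℝ) < (k:ℝ) := by exact_mod_cast hk
    positivity
  rcases le_or_gt k K with hkK | hkK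
  · have hmem' : k ∈ Finset.Icc 1 K := Finset.mem_Icc.2 ⟨hk, hkK⟩
    have h1 : m ≤ |c k| * (k:ℝ)^3 := Finset.inf'_le _ hmem'
    rw [div_le_iff₀ hkp]
    exact le_trans (min_le_right _ _) h1
  · have h2 := htail k (by omega)
    refine le_trans ?_ h2
    gcongr
    exact min_le_left _ _
end

section
/- Let μ : [0,1] → ℝ be twice continuously differentiable with μ'(1) + μ'(0) ≠ 0 and μ'(1) − μ'(0) ≠ 0, and set d_k := √2 ∫₀¹ μ(x) cos(kπx) dx for k ≥ 1. If d_k ≠ 0 for every k ≥ 1, then there exists a constant C > 0 such that |d_k| ≥ C k^{−2} for every k ≥ 1. -/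
open MeasureTheory Real Set Filter

lemma fcnlb_uIcc01 : Set.uIcc (0:ℝ) 1 = Set.Icc 0 1 := Set.uIcc_of_le zero_le_one

lemma fcnlb_hasDerivAt_sin_div (a : ℝ) (ha : a ≠ 0) (x : ℝ) :
    HasDerivAt (fun y => Real.sin (a * y) / a) (Real.cos (a * x)) x := by
  have h : HasDerivAt (fun y => Real.sin (a * y)) (Real.cos (a * x) * a) x :=
    (Real.hasDerivAt_sin (a * x)).comp x (by simpa using (hasDerivAt_id x).const_mul a)
  simpa [mul_div_cancel_right₀ _ ha] using h.div_const a

lemma fcnlb_hasDerivAt_neg_cos_div (a : ℝ) (ha : a ≠ 0) (x : ℝ) :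
    HasDerivAt (fun y => -Real.cos (a * y) / (a * a)) (Real.sin (a * x) / a) x := by
  have h : HasDerivAt (fun y => Real.cos (a * y)) (-Real.sin (a * x) * a) x :=
    (Real.hasDerivAt_cos (a * x)).comp x (by simpa using (hasDerivAt_id x).const_mul a)
  have h2 := (h.neg).div_const (a * a)
  refine h2.congr_deriv ?_
  rw [div_eq_div_iff (by simp [ha]) (by simp [ha])]
  ring

lemma fcnlb_ibp (μ μ' μ'' : ℝ → ℝ)
    (hμ : ∀ x ∈ Set.Icc (0:ℝ) 1, HasDerivWithinAt μ (μ' x) (Set.Icc 0 1) x)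
    (hμ' : ∀ x ∈ Set.Icc (0:ℝ) 1, HasDerivWithinAt μ' (μ'' x) (Set.Icc 0 1) x)
    (hμ'' : ContinuousOn μ'' (Set.Icc 0 1))
    (k : ℕ) (hk : 1 ≤ k) :
    ((k : ℝ) * Real.pi) ^ 2 * ∫ x in (0:ℝ)..1, μ x * Real.cos (k * Real.pi * x)
      = (-1) ^ k * μ' 1 - μ' 0 - ∫ x in (0:ℝ)..1, μ'' x * Real.cos (k * Real.pi * x) := by
  set a : ℝ := (k : ℝ) * Real.pi with ha_def
  have hkpos : (0:ℝ) < k := by exact_mod_cast hk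
  have ha : a ≠ 0 := by positivity
  have hcontμ' : ContinuousOn μ' (Set.Icc (0:ℝ) 1) :=
    fun x hx => (hμ' x hx).continuousWithinAt
  have hIμ' : IntervalIntegrable μ' MeasureTheory.volume 0 1 := by
    apply ContinuousOn.intervalIntegrable; rwa [fcnlb_uIcc01]
  have hIμ'' : IntervalIntegrable μ'' MeasureTheory.volume 0 1 := by
    apply ContinuousOn.intervalIntegrable; rwa [fcnlb_uIcc01]
  -- first integration by parts
  have h1 : ∫ x in (0:ℝ)..1, μ x * Real.cos (a * x)
      = μ 1 * (Real.sin (a * 1) / a) - μ 0 * (Real.sin (a * 0) / a)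
        - ∫ x in (0:ℝ)..1, μ' x * (Real.sin (a * x) / a) := by
    apply intervalIntegral.integral_mul_deriv_eq_deriv_mul_of_hasDerivWithinAt
      (u := μ) (v := fun x => Real.sin (a * x) / a) (u' := μ')
      (v' := fun x => Real.cos (a * x))
    · intro x hx; rw [fcnlb_uIcc01] at *; exact hμ x hx
    · intro x hx
      exact (fcnlb_hasDerivAt_sin_div a ha x).hasDerivWithinAt
    · exact hIμ'
    · apply ContinuousOn.intervalIntegrable
      exact (Real.continuous_cos.comp (continuous_const.mul continuous_id)).continuousOn
  -- second integration by parts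
  have h2 : ∫ x in (0:ℝ)..1, μ' x * (Real.sin (a * x) / a)
      = μ' 1 * (-Real.cos (a * 1) / (a * a)) - μ' 0 * (-Real.cos (a * 0) / (a * a))
        - ∫ x in (0:ℝ)..1, μ'' x * (-Real.cos (a * x) / (a * a)) := by
    apply intervalIntegral.integral_mul_deriv_eq_deriv_mul_of_hasDerivWithinAt
      (u := μ') (v := fun x => -Real.cos (a * x) / (a * a)) (u' := μ'')
      (v' := fun x => Real.sin (a * x) / a)
    · intro x hx; rw [fcnlb_uIcc01] at *; exact hμ' x hx
    · intro x hx
      exact (fcnlb_hasDerivAt_neg_cos_div a ha x).hasDerivWithinAt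
    · exact hIμ''
    · apply ContinuousOn.intervalIntegrable
      exact ((Real.continuous_sin.comp (continuous_const.mul continuous_id)).div_const a).continuousOn
  have h3 : ∫ x in (0:ℝ)..1, μ'' x * (-Real.cos (a * x) / (a * a))
      = (-(a * a)⁻¹) * ∫ x in (0:ℝ)..1, μ'' x * Real.cos (a * x) := by
    rw [← intervalIntegral.integral_const_mul]
    apply intervalIntegral.integral_congr
    intro x _; ring
  have hsin : Real.sin (a * 1) = 0 := by
    rw [mul_one, ha_def]; exact Real.sin_nat_mul_pi k
  have hcos : Real.cos (a * 1) = (-1) ^ k := by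
    rw [mul_one, ha_def]
    simpa using Real.cos_nat_mul_pi_sub 0 k
  have harg : ∀ x : ℝ, (k : ℝ) * Real.pi * x = a * x := fun x => rfl
  rw [show (fun x => μ x * Real.cos ((k:ℝ) * Real.pi * x)) = fun x => μ x * Real.cos (a * x) from rfl] at *
  rw [h1, h2, h3, hsin, hcos]
  simp only [mul_zero, Real.sin_zero, Real.cos_zero, zero_div, mul_one]
  field_simp
  ring

lemma fcnlb_hw : Filter.Tendsto (fun k : ℕ => (k : ℝ) / 2) Filter.atTop (Filter.cocompact ℝ) := by
  rw [cocompact_eq_atBot_atTop]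
  refine Filter.Tendsto.mono_right ?_ le_sup_right
  exact Filter.Tendsto.atTop_div_const (by norm_num) tendsto_natCast_atTop_atTop

lemma fcnlb_rl (g : ℝ → ℝ) (hg : ContinuousOn g (Set.Icc 0 1)) :
    Tendsto (fun k : ℕ => ∫ x in (0:ℝ)..1, g x * Real.cos (k * Real.pi * x))
      atTop (nhds 0) := by
  set f : ℝ → ℂ := (Set.Ioc (0:ℝ) 1).indicator (fun x => (g x : ℂ)) with hf
  have key := Real.tendsto_integral_exp_smul_cocompact f
  have h2 := key.comp fcnlb_hw
  have h3 := (Complex.continuous_re.tendsto 0).comp h2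
  simp only [Complex.zero_re] at h3
  convert h3 using 2 with k
  have hind : (fun v : ℝ => Real.fourierChar (-(v * ((k : ℝ) / 2))) • f v)
      = (Set.Ioc (0:ℝ) 1).indicator
          (fun v => Real.fourierChar (-(v * ((k : ℝ) / 2))) • (g v : ℂ)) := by
    funext v
    by_cases hv : v ∈ Set.Ioc (0:ℝ) 1
    · simp [hf, Set.indicator_of_mem hv]
    · simp [hf, Set.indicator_of_notMem hv]
  have hint : MeasureTheory.IntegrableOn
      (fun v => Real.fourierChar (-(v * ((k : ℝ) / 2))) • (g v : ℂ))
      (Set.Ioc (0:ℝ) 1) := by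
    apply MeasureTheory.IntegrableOn.mono_set _ Set.Ioc_subset_Icc_self
    apply ContinuousOn.integrableOn_Icc
    apply ContinuousOn.smul _ (Complex.continuous_ofReal.comp_continuousOn hg)
    exact (continuous_subtype_val.comp (Real.continuous_fourierChar.comp
      ((continuous_id.mul continuous_const).neg))).continuousOn
  calc ∫ x in (0:ℝ)..1, g x * Real.cos (k * Real.pi * x)
      = ∫ x in Set.Ioc (0:ℝ) 1, g x * Real.cos (k * Real.pi * x) := by
        rw [intervalIntegral.integral_of_le zero_le_one]
    _ = ∫ x in Set.Ioc (0:ℝ) 1,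
          (Real.fourierChar (-(x * ((k : ℝ) / 2))) • ((g x : ℂ))).re := by
        apply MeasureTheory.setIntegral_congr_fun measurableSet_Ioc
        intro x _
        dsimp only
        rw [Circle.smul_def, Real.fourierChar_apply]
        have : ((2 * Real.pi * -(x * ((k:ℝ)/2))) : ℝ) = -((k:ℝ) * Real.pi * x) := by ring
        rw [this, smul_eq_mul, Complex.mul_re, Complex.ofReal_re, Complex.ofReal_im,
          mul_zero, sub_zero, Complex.exp_ofReal_mul_I_re, Real.cos_neg, mul_comm]
    _ = (∫ x in Set.Ioc (0:ℝ) 1,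
          Real.fourierChar (-(x * ((k : ℝ) / 2))) • ((g x : ℂ))).re := by
        simpa using (ContinuousLinearMap.integral_comp_comm Complex.reCLM hint)
    _ = (∫ v : ℝ, Real.fourierChar (-(v * ((k : ℝ) / 2))) • f v).re := by
        rw [hind, MeasureTheory.integral_indicator measurableSet_Ioc]

/-- Lower bound on the Fourier coefficients `d_k = √2 ∫₀¹ μ(x) cos(kπx) dx` for a `C²`
potential `μ` with `μ'(1) ± μ'(0) ≠ 0` and `d_k ≠ 0` for all `k`: there is `C > 0` with
`|d_k| ≥ C k⁻²`. -/
theorem fourier_coefficients_neumann_lower_bound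
    (μ μ' μ'' : ℝ → ℝ)
    (hμ : ∀ x ∈ Set.Icc (0:ℝ) 1, HasDerivWithinAt μ (μ' x) (Set.Icc 0 1) x)
    (hμ' : ∀ x ∈ Set.Icc (0:ℝ) 1, HasDerivWithinAt μ' (μ'' x) (Set.Icc 0 1) x)
    (hμ'' : ContinuousOn μ'' (Set.Icc 0 1))
    (hsum : μ' 1 + μ' 0 ≠ 0) (hdiff : μ' 1 - μ' 0 ≠ 0)
    (d : ℕ → ℝ)
    (hd : ∀ k : ℕ, 1 ≤ k →
      d k = Real.sqrt 2 * ∫ x in (0:ℝ)..1, μ x * Real.cos (k * Real.pi * x))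
    (hne : ∀ k : ℕ, 1 ≤ k → d k ≠ 0) :
    ∃ C > (0:ℝ), ∀ k : ℕ, 1 ≤ k → C / (k : ℝ) ^ 2 ≤ |d k| := by
  have hπ : (0:ℝ) < Real.pi := Real.pi_pos
  set ε : ℝ := min |μ' 1 - μ' 0| |μ' 1 + μ' 0| with hεdef
  have hε : 0 < ε := lt_min (abs_pos.mpr hdiff) (abs_pos.mpr hsum)
  have hRL := fcnlb_rl μ'' hμ''
  have hev : ∀ᶠ k : ℕ in Filter.atTop,
      |∫ x in (0:ℝ)..1, μ'' x * Real.cos (k * Real.pi * x)| < ε / 2 := by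
    have h := hRL.eventually (eventually_abs_sub_lt (0:ℝ) (half_pos hε))
    simpa using h
  obtain ⟨N, hN⟩ := Filter.eventually_atTop.mp hev
  set M : ℕ := max N 1 with hMdef
  have hSne : (Finset.Icc 1 M).Nonempty :=
    ⟨1, Finset.mem_Icc.mpr ⟨le_refl 1, le_max_right N 1⟩⟩
  set C1 : ℝ := (Finset.Icc 1 M).inf' hSne (fun j => |d j| * (j:ℝ)^2) with hC1def
  have hC1 : 0 < C1 := by
    rw [hC1def, Finset.lt_inf'_iff]
    intro j hj
    have hj1 : 1 ≤ j := (Finset.mem_Icc.mp hj).1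
    have hdj : d j ≠ 0 := hne j hj1
    have hj0 : (j:ℝ) ≠ 0 := Nat.cast_ne_zero.mpr (by omega)
    positivity
  set c0 : ℝ := Real.sqrt 2 * ε / (2 * Real.pi ^ 2) with hc0def
  have hc0 : 0 < c0 := by
    have h2 : (0:ℝ) < Real.sqrt 2 := Real.sqrt_pos.mpr (by norm_num)
    positivity
  refine ⟨min C1 c0, lt_min hC1 hc0, fun k hk => ?_⟩
  have hk0 : (k:ℝ) ≠ 0 := Nat.cast_ne_zero.mpr (by omega)
  have hk2 : (0:ℝ) < (k:ℝ)^2 := by positivity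
  by_cases hkM : k ≤ M
  · have hmem : k ∈ Finset.Icc 1 M := Finset.mem_Icc.mpr ⟨hk, hkM⟩
    have hle : C1 ≤ |d k| * (k:ℝ)^2 := Finset.inf'_le _ hmem
    calc min C1 c0 / (k:ℝ)^2 ≤ C1 / (k:ℝ)^2 := by gcongr; exact min_le_left _ _
      _ ≤ |d k| := by rw [div_le_iff₀ hk2]; linarith
  · have hkN : N ≤ k := le_trans (le_max_left N 1) (le_of_lt (not_le.mp hkM))
    have hI := hN k hkN
    set J : ℝ := ∫ x in (0:ℝ)..1, μ x * Real.cos (k * Real.pi * x) with hJdef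
    have key := fcnlb_ibp μ μ' μ'' hμ hμ' hμ'' k hk
    have hA : ε ≤ |(-1:ℝ)^k * μ' 1 - μ' 0| := by
      rcases Nat.even_or_odd k with he | ho
      · rw [he.neg_one_pow, one_mul]; exact min_le_left _ _
      · rw [ho.neg_one_pow, neg_one_mul]
        have h' : -μ' 1 - μ' 0 = -(μ' 1 + μ' 0) := by ring
        rw [h', abs_neg]; exact min_le_right _ _
    have h5 : ε / 2 ≤ |((k:ℝ) * Real.pi)^2 * J| := by
      rw [← hJdef] at key
      rw [key]
      have habs := abs_sub_abs_le_abs_sub ((-1:ℝ)^k * μ' 1 - μ' 0)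
        (∫ x in (0:ℝ)..1, μ'' x * Real.cos (k * Real.pi * x))
      linarith [abs_lt.mp hI]
    have hsq : |((k:ℝ) * Real.pi)^2 * J| = ((k:ℝ) * Real.pi)^2 * |J| := by
      rw [abs_mul, abs_of_nonneg (sq_nonneg _)]
    have hJlb : ε / 2 / ((k:ℝ) * Real.pi)^2 ≤ |J| := by
      rw [div_le_iff₀ (by positivity)]
      rw [hsq] at h5; linarith
    have hdk : |d k| = Real.sqrt 2 * |J| := by
      rw [hd k hk, abs_mul, abs_of_nonneg (Real.sqrt_nonneg 2), hJdef]
    calc min C1 c0 / (k:ℝ)^2 ≤ c0 / (k:ℝ)^2 := by gcongr; exact min_le_right _ _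
      _ = Real.sqrt 2 * (ε / 2 / ((k:ℝ) * Real.pi)^2) := by
          rw [hc0def]; field_simp
      _ ≤ Real.sqrt 2 * |J| :=
          mul_le_mul_of_nonneg_left hJlb (Real.sqrt_nonneg 2)
      _ = |d k| := hdk.symm
end
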